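/- arXiv:1812.10096 — 4 statements merged into one kernel-verified Lean document; each statement's English description precedes it below -/
import Mathlib

section
/- Poincaré-type inequality on a network: there exists a constant C > 0 such that for every family v = (v^i) of H¹ functions on the edges and every family V = (V^j) ∈ (ℝ³)^{n_V} of vertex vectors, one has (Σ_i ∫₀^{ℓⁱ} |v^i(s)|² ds)^{1/2} ≤ C · ( Σ_i ∫₀^{ℓⁱ} |∂ₛv^i(s)|² ds + |Σ_i ∫₀^{ℓⁱ} v^i(s) ds|² + Σ_i |v^i(0) − V^{tail(i)}|² + Σ_i |v^i(ℓⁱ) − V^{head(i)}|² )^{1/2}. -/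
open MeasureTheory Matrix

noncomputable section

abbrev E3 : Type := EuclideanSpace ℝ (Fin 3)

def dot3 (a b : E3) : ℝ := ∑ j, a j * b j

def cross3 (a b : E3) : E3 :=
  WithLp.toLp 2 ![a 1 * b 2 - a 2 * b 1, a 2 * b 0 - a 0 * b 2, a 0 * b 1 - a 1 * b 0]

def SqIntOn (f : ℝ → E3) (l : ℝ) : Prop :=
  IntegrableOn f (Set.Ioc 0 l) ∧ IntegrableOn (fun s => ‖f s‖ ^ 2) (Set.Ioc 0 l)

def H1On (l : ℝ) (v dv : ℝ → E3) : Prop :=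
  ContinuousOn v (Set.Icc 0 l) ∧ SqIntOn dv l ∧
    ∀ x ∈ Set.Icc 0 l, v x = v 0 + ∫ s in Set.Ioc 0 x, dv s

def EdgeConn {nE nV : ℕ} (tail head : Fin nE → Fin nV) : Prop :=
  ∀ a b : Fin nV, Relation.ReflTransGen
    (fun x y => ∃ i, (tail i = x ∧ head i = y) ∨ (tail i = y ∧ head i = x)) a b

variable {nE nV : ℕ}

def bform (tail head : Fin nE → Fin nV) (l : Fin nE → ℝ) (t : Fin nE → ℝ → E3)
    (q p : Fin nE → ℝ → E3) (Pp Pm Qp Qm : Fin nE → E3) (al be : E3)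
    (v dv w dw : Fin nE → ℝ → E3) (V W : Fin nV → E3) : ℝ :=
  (∑ i, ∫ s in Set.Ioc 0 (l i),
      (-(dot3 (p i s) (dv i s + cross3 (t i s) (w i s))) - dot3 (q i s) (dw i s)))
  + (∑ i, (dot3 (Pp i) (v i (l i)) - dot3 (Pm i) (v i 0)))
  + (∑ i, (dot3 (Qp i) (w i (l i)) - dot3 (Qm i) (w i 0)))
  - (∑ j, dot3 ((∑ i ∈ Finset.univ.filter fun i => head i = j, Pp i)
        - ∑ i ∈ Finset.univ.filter fun i => tail i = j, Pm i) (V j))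
  - (∑ j, dot3 ((∑ i ∈ Finset.univ.filter fun i => head i = j, Qp i)
        - ∑ i ∈ Finset.univ.filter fun i => tail i = j, Qm i) (W j))
  + dot3 al (∑ i, ∫ s in Set.Ioc 0 (l i), v i s)
  + dot3 be (∑ i, ∫ s in Set.Ioc 0 (l i), w i s)

def normVsq (l : Fin nE → ℝ) (q p : Fin nE → ℝ → E3) (Pp Pm Qp Qm : Fin nE → E3)
    (al be : E3) : ℝ :=
  (∑ i, ∫ s in Set.Ioc 0 (l i), (‖q i s‖ ^ 2 + ‖p i s‖ ^ 2))
  + (∑ i, ‖Pp i‖ ^ 2) + (∑ i, ‖Pm i‖ ^ 2) + (∑ i, ‖Qp i‖ ^ 2) + (∑ i, ‖Qm i‖ ^ 2)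
  + ‖al‖ ^ 2 + ‖be‖ ^ 2

def normMsq (l : Fin nE → ℝ) (v dv w dw : Fin nE → ℝ → E3) (V W : Fin nV → E3) : ℝ :=
  (∑ i, ∫ s in Set.Ioc 0 (l i), (‖v i s‖ ^ 2 + ‖dv i s‖ ^ 2 + ‖w i s‖ ^ 2 + ‖dw i s‖ ^ 2))
  + (∑ j, ‖V j‖ ^ 2) + (∑ j, ‖W j‖ ^ 2)

def matVec (A : Matrix (Fin 3) (Fin 3) ℝ) (x : E3) : E3 := WithLp.toLp 2 (fun j => ∑ l, A j l * x l)

def aform (l : Fin nE → ℝ) (Q : Fin nE → ℝ → Matrix (Fin 3) (Fin 3) ℝ)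
    (H : Fin nE → Matrix (Fin 3) (Fin 3) ℝ) (q xi : Fin nE → ℝ → E3) : ℝ :=
  ∑ i, ∫ s in Set.Ioc 0 (l i),
    dot3 (matVec (Q i s * (H i)⁻¹ * (Q i s)ᵀ) (q i s)) (xi i s)

def PolyDeg (m : ℕ) (g : ℝ → E3) : Prop :=
  ∀ j : Fin 3, ∃ P : Polynomial ℝ, P.natDegree ≤ m ∧ ∀ s, g s j = P.eval s

def SobOn : ℕ → ℝ → (ℝ → E3) → Prop
  | 0, l, g => SqIntOn g l
  | m + 1, l, g => ∃ g', SobOn m l g' ∧ ContinuousOn g (Set.Icc 0 l) ∧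
      ∀ x ∈ Set.Icc 0 l, g x = g 0 + ∫ s in Set.Ioc 0 x, g' s

lemma my_le_sqrt {x y : ℝ} (hx : 0 ≤ x) (h : x ^ 2 ≤ y) : x ≤ Real.sqrt y := by
  have h2 := Real.sqrt_le_sqrt h
  rwa [Real.sqrt_sq hx] at h2

lemma my_cs {f : ℝ → ℝ} {l : ℝ} (hl : 0 < l) (hf : ∀ s, 0 ≤ f s)
    (h1 : IntegrableOn f (Set.Ioc 0 l))
    (h2 : IntegrableOn (fun s => f s ^ 2) (Set.Ioc 0 l)) :
    (∫ s in Set.Ioc 0 l, f s) ^ 2 ≤ l * ∫ s in Set.Ioc 0 l, f s ^ 2 := by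
  set a := ∫ s in Set.Ioc 0 l, f s ^ 2 with ha
  set t := ∫ s in Set.Ioc 0 l, f s with hT
  have hanon : 0 ≤ a := setIntegral_nonneg measurableSet_Ioc fun s _ => sq_nonneg _
  have htn : 0 ≤ t := setIntegral_nonneg measurableSet_Ioc fun s _ => hf s
  have key : ∀ ε : ℝ, 0 < ε → t ≤ (ε * l + a / ε) / 2 := by
    intro ε hε
    have hle : ∀ s ∈ Set.Ioc 0 l, f s ≤ (ε + f s ^ 2 / ε) / 2 := by
      intro s _
      have key2 : ε * (2 * f s) ≤ ε * (ε + f s ^ 2 / ε) := by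
        have he : ε * (ε + f s ^ 2 / ε) = ε ^ 2 + f s ^ 2 := by
          field_simp
        rw [he]; nlinarith [sq_nonneg (f s - ε)]
      have h3 := le_of_mul_le_mul_left key2 hε
      linarith
    have hIc : IntegrableOn (fun _ : ℝ => ε) (Set.Ioc 0 l) :=
      integrableOn_const measure_Ioc_lt_top.ne
    have hInt : IntegrableOn (fun s => (ε + f s ^ 2 / ε) / 2) (Set.Ioc 0 l) :=
      (hIc.add (h2.div_const ε)).div_const 2
    calc t ≤ ∫ s in Set.Ioc 0 l, (ε + f s ^ 2 / ε) / 2 :=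
        setIntegral_mono_on h1 hInt measurableSet_Ioc hle
      _ = (ε * l + a / ε) / 2 := by
        rw [integral_div]
        congr 1
        rw [integral_add hIc (h2.div_const ε), integral_div, setIntegral_const]
        simp [Real.volume_Ioc, ENNReal.toReal_ofReal hl.le, mul_comm, max_eq_left hl.le, ha]
  rcases eq_or_lt_of_le hanon with h0 | hpos
  · have hto : t ≤ 0 := by
      by_contra hc
      push_neg at hc
      have hk := key (t / l) (div_pos hc hl)
      rw [← h0] at hk
      have : t / l * l = t := by field_simp
      rw [this] at hk
      simp at hk
      linarith
    have ht0 : t = 0 := le_antisymm hto htn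
    rw [ht0]
    simpa using mul_nonneg hl.le hanon
  · set ε := Real.sqrt (a / l) with hedef
    have hε : 0 < ε := Real.sqrt_pos.mpr (div_pos hpos hl)
    have hε2 : ε ^ 2 = a / l := Real.sq_sqrt (div_pos hpos hl).le
    have ha' : a = ε ^ 2 * l := by rw [hε2]; field_simp
    have hdiv : a / ε = ε * l := by
      rw [ha']; field_simp
    have hk := key ε hε
    rw [hdiv] at hk
    have ht : t ≤ ε * l := by linarith
    calc t ^ 2 ≤ (ε * l) ^ 2 := pow_le_pow_left₀ htn ht 2
      _ = l * a := by rw [ha']; ring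

lemma diff_bound {l : ℝ} {v dv : ℝ → E3} (hl : 0 < l) (h : H1On l v dv)
    {x : ℝ} (hx : x ∈ Set.Icc 0 l) :
    ‖v x - v 0‖ ≤ Real.sqrt (l * ∫ s in Set.Ioc 0 l, ‖dv s‖ ^ 2) := by
  obtain ⟨hc, ⟨hint, hint2⟩, hrep⟩ := h
  have hval : v x - v 0 = ∫ s in Set.Ioc 0 x, dv s := by
    rw [hrep x hx]; abel
  apply my_le_sqrt (norm_nonneg _)
  have h1 : ‖v x - v 0‖ ≤ ∫ s in Set.Ioc 0 x, ‖dv s‖ := by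
    rw [hval]; exact norm_integral_le_integral_norm _
  have h2 : (∫ s in Set.Ioc 0 x, ‖dv s‖) ≤ ∫ s in Set.Ioc 0 l, ‖dv s‖ := by
    apply setIntegral_mono_set hint.norm
    · exact Filter.Eventually.of_forall fun s => norm_nonneg _
    · exact HasSubset.Subset.eventuallyLE (Set.Ioc_subset_Ioc_right hx.2)
  have h3 := my_cs hl (fun s => norm_nonneg (dv s)) hint.norm hint2
  have h4 : ‖v x - v 0‖ ^ 2 ≤ (∫ s in Set.Ioc 0 l, ‖dv s‖) ^ 2 :=
    pow_le_pow_left₀ (norm_nonneg _) (h1.trans h2) 2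
  exact h4.trans h3

lemma mean_bound {l : ℝ} {v dv : ℝ → E3} (hl : 0 < l) (h : H1On l v dv) :
    ‖(∫ s in Set.Ioc 0 l, v s) - l • v 0‖ ≤
      l * Real.sqrt (l * ∫ s in Set.Ioc 0 l, ‖dv s‖ ^ 2) := by
  have hcont := h.1
  have hvint : IntegrableOn v (Set.Ioc 0 l) :=
    (hcont.integrableOn_Icc).mono_set Set.Ioc_subset_Icc_self
  have hconst : (∫ _ in Set.Ioc 0 l, (v 0 : E3)) = l • v 0 := by
    rw [setIntegral_const]
    congr 1
    simp [Real.volume_Ioc, ENNReal.toReal_ofReal hl.le, hl.le]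
  have hcint : IntegrableOn (fun _ : ℝ => v 0) (Set.Ioc 0 l) :=
    integrableOn_const measure_Ioc_lt_top.ne
  rw [← hconst, ← integral_sub hvint hcint]
  have hb := norm_setIntegral_le_of_norm_le_const (μ := volume)
    (s := Set.Ioc 0 l) (f := fun s => v s - v 0)
    (C := Real.sqrt (l * ∫ s in Set.Ioc 0 l, ‖dv s‖ ^ 2))
    measure_Ioc_lt_top
    (fun s hs => diff_bound hl h (Set.Ioc_subset_Icc_self hs))
  rw [measureReal_def, Real.volume_Ioc, sub_zero, ENNReal.toReal_ofReal hl.le] at hb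
  linarith [hb]


/-- The quantity inside the square root on the right-hand side. -/
def Dq (tail head : Fin nE → Fin nV) (l : Fin nE → ℝ)
    (v dv : Fin nE → ℝ → E3) (V : Fin nV → E3) : ℝ :=
  (∑ i, ∫ s in Set.Ioc 0 (l i), ‖dv i s‖ ^ 2)
    + ‖∑ i, ∫ s in Set.Ioc 0 (l i), v i s‖ ^ 2
    + (∑ i, ‖v i 0 - V (tail i)‖ ^ 2)
    + (∑ i, ‖v i (l i) - V (head i)‖ ^ 2)

lemma sumA_nonneg (l : Fin nE → ℝ) (dv : Fin nE → ℝ → E3) :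
    0 ≤ ∑ i, ∫ s in Set.Ioc 0 (l i), ‖dv i s‖ ^ 2 :=
  Finset.sum_nonneg fun i _ =>
    setIntegral_nonneg measurableSet_Ioc fun s _ => sq_nonneg _

lemma Dq_nonneg (tail head : Fin nE → Fin nV) (l : Fin nE → ℝ)
    (v dv : Fin nE → ℝ → E3) (V : Fin nV → E3) :
    0 ≤ Dq tail head l v dv V := by
  have h1 := sumA_nonneg l dv
  have h2 : (0:ℝ) ≤ ‖∑ i, ∫ s in Set.Ioc 0 (l i), v i s‖ ^ 2 := sq_nonneg _
  have h3 : (0:ℝ) ≤ ∑ i, ‖v i 0 - V (tail i)‖ ^ 2 :=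
    Finset.sum_nonneg fun i _ => sq_nonneg _
  have h4 : (0:ℝ) ≤ ∑ i, ‖v i (l i) - V (head i)‖ ^ 2 :=
    Finset.sum_nonneg fun i _ => sq_nonneg _
  unfold Dq; linarith

lemma a_le_Dq (tail head : Fin nE → Fin nV) (l : Fin nE → ℝ)
    (v dv : Fin nE → ℝ → E3) (V : Fin nV → E3) (i : Fin nE) :
    (∫ s in Set.Ioc 0 (l i), ‖dv i s‖ ^ 2) ≤ Dq tail head l v dv V := by
  have h0 : (∫ s in Set.Ioc 0 (l i), ‖dv i s‖ ^ 2) ≤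
      ∑ i, ∫ s in Set.Ioc 0 (l i), ‖dv i s‖ ^ 2 :=
    Finset.single_le_sum (f := fun i => ∫ s in Set.Ioc 0 (l i), ‖dv i s‖ ^ 2)
      (fun j _ => setIntegral_nonneg measurableSet_Ioc fun s _ => sq_nonneg _)
      (Finset.mem_univ i)
  have h2 : (0:ℝ) ≤ ‖∑ i, ∫ s in Set.Ioc 0 (l i), v i s‖ ^ 2 := sq_nonneg _
  have h3 : (0:ℝ) ≤ ∑ i, ‖v i 0 - V (tail i)‖ ^ 2 :=
    Finset.sum_nonneg fun i _ => sq_nonneg _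
  have h4 : (0:ℝ) ≤ ∑ i, ‖v i (l i) - V (head i)‖ ^ 2 :=
    Finset.sum_nonneg fun i _ => sq_nonneg _
  unfold Dq; linarith

lemma tail_le_Dq (tail head : Fin nE → Fin nV) (l : Fin nE → ℝ)
    (v dv : Fin nE → ℝ → E3) (V : Fin nV → E3) (i : Fin nE) :
    ‖v i 0 - V (tail i)‖ ≤ Real.sqrt (Dq tail head l v dv V) := by
  apply my_le_sqrt (norm_nonneg _)
  have h0 : ‖v i 0 - V (tail i)‖ ^ 2 ≤ ∑ i, ‖v i 0 - V (tail i)‖ ^ 2 :=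
    Finset.single_le_sum (f := fun i => ‖v i 0 - V (tail i)‖ ^ 2)
      (fun j _ => sq_nonneg _) (Finset.mem_univ i)
  have h1 := sumA_nonneg l dv
  have h2 : (0:ℝ) ≤ ‖∑ i, ∫ s in Set.Ioc 0 (l i), v i s‖ ^ 2 := sq_nonneg _
  have h4 : (0:ℝ) ≤ ∑ i, ‖v i (l i) - V (head i)‖ ^ 2 :=
    Finset.sum_nonneg fun i _ => sq_nonneg _
  unfold Dq; linarith

lemma head_le_Dq (tail head : Fin nE → Fin nV) (l : Fin nE → ℝ)
    (v dv : Fin nE → ℝ → E3) (V : Fin nV → E3) (i : Fin nE) :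
    ‖v i (l i) - V (head i)‖ ≤ Real.sqrt (Dq tail head l v dv V) := by
  apply my_le_sqrt (norm_nonneg _)
  have h0 : ‖v i (l i) - V (head i)‖ ^ 2 ≤ ∑ i, ‖v i (l i) - V (head i)‖ ^ 2 :=
    Finset.single_le_sum (f := fun i => ‖v i (l i) - V (head i)‖ ^ 2)
      (fun j _ => sq_nonneg _) (Finset.mem_univ i)
  have h1 := sumA_nonneg l dv
  have h2 : (0:ℝ) ≤ ‖∑ i, ∫ s in Set.Ioc 0 (l i), v i s‖ ^ 2 := sq_nonneg _
  have h3 : (0:ℝ) ≤ ∑ i, ‖v i 0 - V (tail i)‖ ^ 2 :=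
    Finset.sum_nonneg fun i _ => sq_nonneg _
  unfold Dq; linarith

lemma meanInt_le_Dq (tail head : Fin nE → Fin nV) (l : Fin nE → ℝ)
    (v dv : Fin nE → ℝ → E3) (V : Fin nV → E3) :
    ‖∑ i, ∫ s in Set.Ioc 0 (l i), v i s‖ ≤ Real.sqrt (Dq tail head l v dv V) := by
  apply my_le_sqrt (norm_nonneg _)
  have h1 := sumA_nonneg l dv
  have h3 : (0:ℝ) ≤ ∑ i, ‖v i 0 - V (tail i)‖ ^ 2 :=
    Finset.sum_nonneg fun i _ => sq_nonneg _
  have h4 : (0:ℝ) ≤ ∑ i, ‖v i (l i) - V (head i)‖ ^ 2 :=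
    Finset.sum_nonneg fun i _ => sq_nonneg _
  unfold Dq; linarith

/-- Poincaré-type inequality on a network. -/
theorem stent_poincare_inequality
    (tail head : Fin nE → Fin nV) (l : Fin nE → ℝ)
    (hl : ∀ i, 0 < l i) (hconn : EdgeConn tail head) :
    ∃ C > (0:ℝ), ∀ (v dv : Fin nE → ℝ → E3) (V : Fin nV → E3),
      (∀ i, H1On (l i) (v i) (dv i)) →
      Real.sqrt (∑ i, ∫ s in Set.Ioc 0 (l i), ‖v i s‖ ^ 2) ≤
        C * Real.sqrt ((∑ i, ∫ s in Set.Ioc 0 (l i), ‖dv i s‖ ^ 2)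
          + ‖∑ i, ∫ s in Set.Ioc 0 (l i), v i s‖ ^ 2
          + (∑ i, ‖v i 0 - V (tail i)‖ ^ 2)
          + (∑ i, ‖v i (l i) - V (head i)‖ ^ 2)) := by
  classical
  rcases Nat.eq_zero_or_pos nE with hE | hE
  · refine ⟨1, one_pos, fun v dv V _ => ?_⟩
    haveI : IsEmpty (Fin nE) := by subst hE; infer_instance
    simp
  -- main case
  haveI : Nonempty (Fin nE) := Fin.pos_iff_nonempty.mp hE
  set L := ∑ i, l i with hLdef
  have hL : 0 < L := Finset.sum_pos (fun i _ => hl i) Finset.univ_nonempty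
  set j0 : Fin nV := tail ⟨0, hE⟩ with hj0
  have hli_le : ∀ i, l i ≤ L := fun i =>
    Finset.single_le_sum (fun j _ => (hl j).le) (Finset.mem_univ i)
  -- uniform bound on ‖v i x - v i 0‖
  have hdiffD : ∀ (v dv : Fin nE → ℝ → E3) (V : Fin nV → E3),
      (∀ i, H1On (l i) (v i) (dv i)) → ∀ i, ∀ x ∈ Set.Icc 0 (l i),
      ‖v i x - v i 0‖ ≤ Real.sqrt L * Real.sqrt (Dq tail head l v dv V) := by
    intro v dv V hv i x hx
    have h1 := diff_bound (hl i) (hv i) hx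
    have h2 : l i * (∫ s in Set.Ioc 0 (l i), ‖dv i s‖ ^ 2) ≤
        L * Dq tail head l v dv V :=
      mul_le_mul (hli_le i) (a_le_Dq tail head l v dv V i)
        (setIntegral_nonneg measurableSet_Ioc fun s _ => sq_nonneg _) hL.le
    calc ‖v i x - v i 0‖ ≤ _ := h1
      _ ≤ Real.sqrt (L * Dq tail head l v dv V) := Real.sqrt_le_sqrt h2
      _ = Real.sqrt L * Real.sqrt (Dq tail head l v dv V) := Real.sqrt_mul hL.le _
  -- adjacent-vertex bound
  have hedge : ∀ (v dv : Fin nE → ℝ → E3) (V : Fin nV → E3),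
      (∀ i, H1On (l i) (v i) (dv i)) → ∀ i : Fin nE,
      ‖V (head i) - V (tail i)‖ ≤
        (2 + Real.sqrt L) * Real.sqrt (Dq tail head l v dv V) := by
    intro v dv V hv i
    have e1 := head_le_Dq tail head l v dv V i
    have e2 := hdiffD v dv V hv i (l i) ⟨(hl i).le, le_rfl⟩
    have e3 := tail_le_Dq tail head l v dv V i
    have hsplit : V (head i) - V (tail i) =
        -(v i (l i) - V (head i)) + (v i (l i) - v i 0) + (v i 0 - V (tail i)) := by
      abel
    rw [hsplit]
    have htri := norm_add₃_le (E := E3) (a := -(v i (l i) - V (head i)))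
      (b := v i (l i) - v i 0) (c := v i 0 - V (tail i))
    rw [norm_neg] at htri
    have : ‖-(v i (l i) - V (head i)) + (v i (l i) - v i 0) + (v i 0 - V (tail i))‖
        ≤ Real.sqrt (Dq tail head l v dv V)
          + Real.sqrt L * Real.sqrt (Dq tail head l v dv V)
          + Real.sqrt (Dq tail head l v dv V) := by
      calc _ ≤ _ := htri
        _ ≤ _ := add_le_add (add_le_add e1 e2) e3
    calc _ ≤ _ := this
      _ = (2 + Real.sqrt L) * Real.sqrt (Dq tail head l v dv V) := by ring
  -- connectivity: uniform constant per vertex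
  have conn : ∀ b : Fin nV, ∃ K : ℝ, 0 ≤ K ∧
      ∀ (v dv : Fin nE → ℝ → E3) (V : Fin nV → E3),
      (∀ i, H1On (l i) (v i) (dv i)) →
      ‖V b - V j0‖ ≤ K * Real.sqrt (Dq tail head l v dv V) := by
    intro b
    induction hconn j0 b with
    | refl => exact ⟨0, le_rfl, fun v dv V _ => by simp⟩
    | @tail b c hab hbc ih =>
      obtain ⟨K, hK, hKp⟩ := ih
      refine ⟨K + (2 + Real.sqrt L), by positivity, ?_⟩
      intro v dv V hv
      obtain ⟨i, hi⟩ := hbc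
      have hbc' : ‖V c - V b‖ ≤
          (2 + Real.sqrt L) * Real.sqrt (Dq tail head l v dv V) := by
        rcases hi with ⟨ht, hh⟩ | ⟨ht, hh⟩
        · have := hedge v dv V hv i; rwa [ht, hh] at this
        · have := hedge v dv V hv i; rw [ht, hh] at this
          rwa [norm_sub_rev] at this
      have hsplit : V c - V j0 = (V c - V b) + (V b - V j0) := by abel
      rw [hsplit]
      calc ‖(V c - V b) + (V b - V j0)‖ ≤ ‖V c - V b‖ + ‖V b - V j0‖ :=
          norm_add_le _ _
        _ ≤ (2 + Real.sqrt L) * Real.sqrt (Dq tail head l v dv V)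
            + K * Real.sqrt (Dq tail head l v dv V) :=
          add_le_add hbc' (hKp v dv V hv)
        _ = (K + (2 + Real.sqrt L)) * Real.sqrt (Dq tail head l v dv V) := by ring
  choose K hK0 hKb using conn
  set Kmax : ℝ := ∑ j, K j with hKm
  have hKmax0 : 0 ≤ Kmax := Finset.sum_nonneg fun j _ => hK0 j
  have hKle : ∀ j, K j ≤ Kmax := by
    rcases Nat.eq_zero_or_pos nV with hV | hV
    · intro j; exact absurd j.2 (by omega)
    · haveI : Nonempty (Fin nV) := Fin.pos_iff_nonempty.mp hV
      exact fun j => Finset.single_le_sum (fun j _ => hK0 j) (Finset.mem_univ j)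
  have hKmaxb : ∀ (v dv : Fin nE → ℝ → E3) (V : Fin nV → E3),
      (∀ i, H1On (l i) (v i) (dv i)) → ∀ j,
      ‖V j - V j0‖ ≤ Kmax * Real.sqrt (Dq tail head l v dv V) := by
    intro v dv V hv j
    exact (hKb j v dv V hv).trans
      (mul_le_mul_of_nonneg_right (hKle j) (Real.sqrt_nonneg _))
  -- bound on ‖V j0‖
  set c2 : ℝ := Real.sqrt L + 1 + Kmax with hc2
  have hc2nn : 0 ≤ c2 := by positivity
  set c3 : ℝ := (1 + L * c2) / L with hc3
  have hc3nn : 0 ≤ c3 := by positivity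
  have hV0 : ∀ (v dv : Fin nE → ℝ → E3) (V : Fin nV → E3),
      (∀ i, H1On (l i) (v i) (dv i)) →
      ‖V j0‖ ≤ c3 * Real.sqrt (Dq tail head l v dv V) := by
    intro v dv V hv
    set D := Dq tail head l v dv V with hD
    have hsD : 0 ≤ Real.sqrt D := Real.sqrt_nonneg _
    have key : ∀ i, ‖(∫ s in Set.Ioc 0 (l i), v i s) - l i • V j0‖ ≤
        l i * (c2 * Real.sqrt D) := by
      intro i
      have hsplit : (∫ s in Set.Ioc 0 (l i), v i s) - l i • V j0 =
          ((∫ s in Set.Ioc 0 (l i), v i s) - l i • v i 0)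
          + l i • (v i 0 - V (tail i)) + l i • (V (tail i) - V j0) := by
        rw [smul_sub, smul_sub]; abel
      rw [hsplit]
      have t1 : ‖(∫ s in Set.Ioc 0 (l i), v i s) - l i • v i 0‖ ≤
          l i * (Real.sqrt L * Real.sqrt D) := by
        have hm := mean_bound (hl i) (hv i)
        have h2 : l i * (∫ s in Set.Ioc 0 (l i), ‖dv i s‖ ^ 2) ≤ L * D :=
          mul_le_mul (hli_le i) (a_le_Dq tail head l v dv V i)
            (setIntegral_nonneg measurableSet_Ioc fun s _ => sq_nonneg _) hL.le
        calc _ ≤ _ := hm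
          _ ≤ l i * Real.sqrt (L * D) :=
            mul_le_mul_of_nonneg_left (Real.sqrt_le_sqrt h2) (hl i).le
          _ = l i * (Real.sqrt L * Real.sqrt D) := by rw [Real.sqrt_mul hL.le]
      have t2 : ‖l i • (v i 0 - V (tail i))‖ ≤ l i * Real.sqrt D := by
        rw [norm_smul, Real.norm_eq_abs, abs_of_pos (hl i)]
        exact mul_le_mul_of_nonneg_left (tail_le_Dq tail head l v dv V i) (hl i).le
      have t3 : ‖l i • (V (tail i) - V j0)‖ ≤ l i * (Kmax * Real.sqrt D) := by
        rw [norm_smul, Real.norm_eq_abs, abs_of_pos (hl i)]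
        exact mul_le_mul_of_nonneg_left (hKmaxb v dv V hv (tail i)) (hl i).le
      calc _ ≤ _ := norm_add₃_le
        _ ≤ l i * (Real.sqrt L * Real.sqrt D) + l i * Real.sqrt D
            + l i * (Kmax * Real.sqrt D) := add_le_add (add_le_add t1 t2) t3
        _ = l i * (c2 * Real.sqrt D) := by rw [hc2]; ring
    have hsum_eq : (∑ i, ∫ s in Set.Ioc 0 (l i), v i s) - L • V j0 =
        ∑ i, ((∫ s in Set.Ioc 0 (l i), v i s) - l i • V j0) := by
      rw [Finset.sum_sub_distrib, ← Finset.sum_smul]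
    have hnorm1 : ‖(∑ i, ∫ s in Set.Ioc 0 (l i), v i s) - L • V j0‖ ≤
        L * (c2 * Real.sqrt D) := by
      rw [hsum_eq]
      calc ‖∑ i, ((∫ s in Set.Ioc 0 (l i), v i s) - l i • V j0)‖
          ≤ ∑ i, ‖(∫ s in Set.Ioc 0 (l i), v i s) - l i • V j0‖ := norm_sum_le _ _
        _ ≤ ∑ i, l i * (c2 * Real.sqrt D) := Finset.sum_le_sum fun i _ => key i
        _ = L * (c2 * Real.sqrt D) := by rw [← Finset.sum_mul]
    have h3 : L * ‖V j0‖ ≤ Real.sqrt D + L * (c2 * Real.sqrt D) := by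
      have htri : ‖L • V j0‖ ≤ ‖∑ i, ∫ s in Set.Ioc 0 (l i), v i s‖
          + ‖(∑ i, ∫ s in Set.Ioc 0 (l i), v i s) - L • V j0‖ := by
        have := norm_sub_le (∑ i, ∫ s in Set.Ioc 0 (l i), v i s)
          ((∑ i, ∫ s in Set.Ioc 0 (l i), v i s) - L • V j0)
        simpa using this
      rw [norm_smul, Real.norm_eq_abs, abs_of_pos hL] at htri
      have hB := meanInt_le_Dq tail head l v dv V
      rw [← hD] at hB
      linarith
    rw [hc3, div_mul_eq_mul_div, le_div_iff₀ hL]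
    calc ‖V j0‖ * L = L * ‖V j0‖ := by ring
      _ ≤ Real.sqrt D + L * (c2 * Real.sqrt D) := h3
      _ = (1 + L * c2) * Real.sqrt D := by ring
  -- final constant
  set c5 : ℝ := Real.sqrt L + (1 + Kmax + c3) with hc5
  have hc5pos : 0 < c5 := by positivity
  refine ⟨Real.sqrt (L * c5 ^ 2), Real.sqrt_pos.mpr (by positivity), ?_⟩
  intro v dv V hv
  set D := Dq tail head l v dv V with hD
  have hsD : 0 ≤ Real.sqrt D := Real.sqrt_nonneg _
  have point : ∀ i, ∀ x ∈ Set.Icc 0 (l i), ‖v i x‖ ≤ c5 * Real.sqrt D := by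
    intro i x hx
    have p1 := hdiffD v dv V hv i x hx
    have p2 := tail_le_Dq tail head l v dv V i
    have p3 := hKmaxb v dv V hv (tail i)
    have p4 := hV0 v dv V hv
    have hsplit : v i x = (v i x - v i 0) + (v i 0 - V (tail i))
        + (V (tail i) - V j0) + V j0 := by abel
    calc ‖v i x‖ = ‖(v i x - v i 0) + (v i 0 - V (tail i))
          + (V (tail i) - V j0) + V j0‖ := by rw [← hsplit]
      _ ≤ ‖(v i x - v i 0) + (v i 0 - V (tail i)) + (V (tail i) - V j0)‖
          + ‖V j0‖ := norm_add_le _ _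
      _ ≤ (‖v i x - v i 0‖ + ‖v i 0 - V (tail i)‖ + ‖V (tail i) - V j0‖)
          + ‖V j0‖ := add_le_add_left (norm_add₃_le) _
      _ ≤ (Real.sqrt L * Real.sqrt D + Real.sqrt D + Kmax * Real.sqrt D)
          + c3 * Real.sqrt D := by
        exact add_le_add (add_le_add (add_le_add p1 p2) p3) p4
      _ = c5 * Real.sqrt D := by rw [hc5]; ring
  have intbound : ∀ i, (∫ s in Set.Ioc 0 (l i), ‖v i s‖ ^ 2) ≤
      l i * (c5 * Real.sqrt D) ^ 2 := by
    intro i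
    have hint : IntegrableOn (fun s => ‖v i s‖ ^ 2) (Set.Ioc 0 (l i)) :=
      (((hv i).1.norm).pow 2).integrableOn_Icc.mono_set Set.Ioc_subset_Icc_self
    have hcint : IntegrableOn (fun _ : ℝ => (c5 * Real.sqrt D) ^ 2)
        (Set.Ioc 0 (l i)) := integrableOn_const measure_Ioc_lt_top.ne
    calc (∫ s in Set.Ioc 0 (l i), ‖v i s‖ ^ 2)
        ≤ ∫ _ in Set.Ioc 0 (l i), (c5 * Real.sqrt D) ^ 2 :=
        setIntegral_mono_on hint hcint measurableSet_Ioc (fun s hs =>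
          pow_le_pow_left₀ (norm_nonneg _)
            (point i s (Set.Ioc_subset_Icc_self hs)) 2)
      _ = l i * (c5 * Real.sqrt D) ^ 2 := by
        rw [setIntegral_const]
        simp [Real.volume_Ioc, ENNReal.toReal_ofReal (hl i).le, (hl i).le]
  have total : (∑ i, ∫ s in Set.Ioc 0 (l i), ‖v i s‖ ^ 2) ≤ L * c5 ^ 2 * D := by
    calc (∑ i, ∫ s in Set.Ioc 0 (l i), ‖v i s‖ ^ 2)
        ≤ ∑ i, l i * (c5 * Real.sqrt D) ^ 2 :=
        Finset.sum_le_sum fun i _ => intbound i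
      _ = L * (c5 * Real.sqrt D) ^ 2 := by rw [← Finset.sum_mul]
      _ = L * c5 ^ 2 * D := by
        rw [mul_pow, Real.sq_sqrt (hD ▸ Dq_nonneg tail head l v dv V)]
        ring
  have hgoal : (∑ i, ∫ s in Set.Ioc 0 (l i), ‖dv i s‖ ^ 2)
      + ‖∑ i, ∫ s in Set.Ioc 0 (l i), v i s‖ ^ 2
      + (∑ i, ‖v i 0 - V (tail i)‖ ^ 2)
      + (∑ i, ‖v i (l i) - V (head i)‖ ^ 2) = D := rfl
  rw [hgoal]
  calc Real.sqrt (∑ i, ∫ s in Set.Ioc 0 (l i), ‖v i s‖ ^ 2)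
      ≤ Real.sqrt (L * c5 ^ 2 * D) := Real.sqrt_le_sqrt total
    _ = Real.sqrt (L * c5 ^ 2) * Real.sqrt D := Real.sqrt_mul (by positivity) _

end
end

section
/- Triviality of the kernel of B^T: suppose (v^i), (w^i) are families of H¹ functions on the edges and V = (V^j), W = (W^j) ∈ (ℝ³)^{n_V} satisfy, for every edge i: ∂ₛv^i + tⁱ × w^i = 0 almost everywhere and ∂ₛw^i = 0 almost everywhere on [0,ℓⁱ]; Σ_i ∫₀^{ℓⁱ} v^i ds = 0 and Σ_i ∫₀^{ℓⁱ} w^i ds = 0; and the boundary matching conditions v^i(0) = V^{tail(i)}, v^i(ℓⁱ) = V^{head(i)}, w^i(0) = W^{tail(i)}, w^i(ℓⁱ) = W^{head(i)}. Then v^i = 0 and w^i = 0 for every edge i, and V = 0 and W = 0. -/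
open MeasureTheory Matrix

noncomputable section

variable {nE nV : ℕ}

lemma cross3_zero_right (a : E3) : cross3 a 0 = 0 := by
  ext j; fin_cases j <;> simp [cross3]

lemma const_of_deriv_zero {l : ℝ} {g dg : ℝ → E3} (h : H1On l g dg)
    (hz : ∀ᵐ s ∂(volume.restrict (Set.Ioc 0 l)), dg s = 0) :
    ∀ x ∈ Set.Icc 0 l, g x = g 0 := by
  intro x hx
  rw [h.2.2 x hx]
  have hsub : Set.Ioc 0 x ⊆ Set.Ioc 0 l := Set.Ioc_subset_Ioc_right hx.2
  have h2 : ∀ᵐ s ∂(volume.restrict (Set.Ioc 0 x)), dg s = 0 :=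
    ae_restrict_of_ae_restrict_of_subset hsub hz
  have : ∫ s in Set.Ioc 0 x, dg s = 0 := integral_eq_zero_of_ae h2
  simp [this]

lemma key_const_zero (tail head : Fin nE → Fin nV) (l : Fin nE → ℝ)
    (hl : ∀ i, 0 < l i) (hNE : 0 < nE) (hconn : EdgeConn tail head)
    (w : Fin nE → ℝ → E3) (W : Fin nV → E3)
    (hwc : ∀ i, ∀ x ∈ Set.Icc 0 (l i), w i x = w i 0)
    (hint : ∑ i, ∫ s in Set.Ioc 0 (l i), w i s = 0)
    (hb3 : ∀ i, w i 0 = W (tail i)) (hb4 : ∀ i, w i (l i) = W (head i)) :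
    (∀ i, ∀ x ∈ Set.Icc 0 (l i), w i x = 0) ∧ W = 0 := by
  have i0 : Fin nE := ⟨0, hNE⟩
  set ω := W (tail i0) with hω
  have hsame : ∀ i, W (tail i) = W (head i) := by
    intro i
    rw [← hb3 i, ← hb4 i, hwc i (l i) ⟨(hl i).le, le_refl _⟩]
  have hWall : ∀ j, W j = ω := by
    intro j
    have := hconn (tail i0) j
    induction this with
    | refl => rfl
    | tail _ h2 ih =>
      obtain ⟨i, hi | hi⟩ := h2
      · rw [← hi.2, ← hsame i, hi.1, ih]
      · rw [← hi.1, hsame i, hi.2, ih]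
  have hint' : ∀ i, ∫ s in Set.Ioc 0 (l i), w i s = (l i) • ω := by
    intro i
    rw [setIntegral_congr_fun measurableSet_Ioc
        (fun s hs => by
          rw [hwc i s (Set.Ioc_subset_Icc_self hs), hb3 i, hWall (tail i)]),
      setIntegral_const, Real.volume_real_Ioc_of_le (hl i).le, sub_zero]
  have hsum : (∑ i, l i) • ω = 0 := by
    rw [Finset.sum_smul]
    rw [← hint]
    exact (Finset.sum_congr rfl fun i _ => (hint' i).symm)
  have hlpos : 0 < ∑ i, l i :=
    Finset.sum_pos (fun i _ => hl i) ⟨i0, Finset.mem_univ i0⟩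
  have hω0 : ω = 0 := by
    rcases smul_eq_zero.1 hsum with h | h
    · exact absurd h hlpos.ne'
    · exact h
  have hW0 : W = 0 := funext fun j => by rw [hWall j, hω0]; rfl
  refine ⟨fun i x hx => ?_, hW0⟩
  rw [hwc i x hx, hb3 i, hWall (tail i), hω0]

/-- Triviality of the kernel of Bᵀ. -/
theorem stent_ker_BT_trivial
    (tail head : Fin nE → Fin nV) (l : Fin nE → ℝ)
    (hl : ∀ i, 0 < l i) (hNE : 0 < nE) (hconn : EdgeConn tail head)
    (Φ t : Fin nE → ℝ → E3)
    (hΦ : ∀ i, ∀ s ∈ Set.Icc 0 (l i), HasDerivWithinAt (Φ i) (t i s) (Set.Icc 0 (l i)) s)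
    (htc : ∀ i, ContinuousOn (t i) (Set.Icc 0 (l i)))
    (htu : ∀ i, ∀ s ∈ Set.Icc 0 (l i), ‖t i s‖ = 1)
    (v dv w dw : Fin nE → ℝ → E3) (V W : Fin nV → E3)
    (hv : ∀ i, H1On (l i) (v i) (dv i)) (hw : ∀ i, H1On (l i) (w i) (dw i))
    (heq1 : ∀ i, ∀ᵐ s ∂(volume.restrict (Set.Ioc 0 (l i))),
        dv i s + cross3 (t i s) (w i s) = 0)
    (heq2 : ∀ i, ∀ᵐ s ∂(volume.restrict (Set.Ioc 0 (l i))), dw i s = 0)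
    (hint1 : ∑ i, ∫ s in Set.Ioc 0 (l i), v i s = 0)
    (hint2 : ∑ i, ∫ s in Set.Ioc 0 (l i), w i s = 0)
    (hb1 : ∀ i, v i 0 = V (tail i)) (hb2 : ∀ i, v i (l i) = V (head i))
    (hb3 : ∀ i, w i 0 = W (tail i)) (hb4 : ∀ i, w i (l i) = W (head i)) :
    (∀ i, ∀ s ∈ Set.Icc 0 (l i), v i s = 0 ∧ w i s = 0) ∧ V = 0 ∧ W = 0 := by

  have hwconst := fun i => const_of_deriv_zero (hw i) (heq2 i)
  obtain ⟨hw0, hW0⟩ := key_const_zero tail head l hl hNE hconn w W hwconst hint2 hb3 hb4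
  have heq1' : ∀ i, ∀ᵐ s ∂(volume.restrict (Set.Ioc 0 (l i))), dv i s = 0 := by
    intro i
    filter_upwards [heq1 i, ae_restrict_mem measurableSet_Ioc] with s h1 h2
    have hwz : w i s = 0 := hw0 i s (Set.Ioc_subset_Icc_self h2)
    rw [hwz, cross3_zero_right, add_zero] at h1
    exact h1
  have hvconst := fun i => const_of_deriv_zero (hv i) (heq1' i)
  obtain ⟨hv0, hV0⟩ := key_const_zero tail head l hl hNE hconn v V hvconst hint1 hb1 hb2
  exact ⟨fun i s hs => ⟨hv0 i s hs, hw0 i s hs⟩, hV0, hW0⟩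


end
end

section
/- Closedness of the range of B^T: the set of all tuples (p, q, P₊, P₋, Q₊, Q₋, α, β), where p = (p^i), q = (q^i) are families of square-integrable functions [0,ℓⁱ] → ℝ³, P₊, P₋, Q₊, Q₋ ∈ (ℝ³)^{n_E} and α, β ∈ ℝ³, for which there exist families (v^i), (w^i) of H¹ functions on the edges and V, W ∈ (ℝ³)^{n_V} with p^i = ∂ₛv^i + tⁱ × w^i a.e., q^i = ∂ₛw^i a.e., α = Σ_i ∫₀^{ℓⁱ} v^i ds, β = Σ_i ∫₀^{ℓⁱ} w^i ds, P₊^i = v^i(ℓⁱ) − V^{head(i)}, P₋^i = v^i(0) − V^{tail(i)}, Q₊^i = w^i(ℓⁱ) − W^{head(i)}, Q₋^i = w^i(0) − W^{tail(i)} for every edge i, is a closed subspace of the product of the L² spaces Π_i L²(0,ℓⁱ;ℝ³) × Π_i L²(0,ℓⁱ;ℝ³) with (ℝ³)^{4 n_E} × ℝ³ × ℝ³ (with the natural product norm). -/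
open MeasureTheory Matrix

noncomputable section

variable {nE nV : ℕ}

open scoped ENNReal NNReal

lemma E3_ext {x y : E3} (h : ∀ j, x j = y j) : x = y := PiLp.ext h

lemma cross3_add_left (a b c : E3) : cross3 (a + b) c = cross3 a c + cross3 b c := by
  apply E3_ext; intro j
  have h : ∀ (u v : E3) (k : Fin 3), (u + v) k = u k + v k := fun u v k => rfl
  fin_cases j <;> simp [cross3, h] <;> ring

lemma cross3_smul_left (r : ℝ) (a c : E3) : cross3 (r • a) c = r • cross3 a c := by
  apply E3_ext; intro j
  have h1 : ∀ (u : E3) (k : Fin 3), (r • u) k = r * u k := fun u k => rfl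
  fin_cases j <;> simp [cross3, h1] <;> ring

lemma cross3_add_right (a b c : E3) : cross3 a (b + c) = cross3 a b + cross3 a c := by
  apply E3_ext; intro j
  have h : ∀ (u v : E3) (k : Fin 3), (u + v) k = u k + v k := fun u v k => rfl
  fin_cases j <;> simp [cross3, h] <;> ring

lemma cross3_smul_right (r : ℝ) (a c : E3) : cross3 a (r • c) = r • cross3 a c := by
  apply E3_ext; intro j
  have h1 : ∀ (u : E3) (k : Fin 3), (r • u) k = r * u k := fun u k => rfl
  fin_cases j <;> simp [cross3, h1] <;> ring

lemma normsq_eq (a : E3) : ‖a‖ ^ 2 = a 0 ^ 2 + a 1 ^ 2 + a 2 ^ 2 := by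
  rw [EuclideanSpace.norm_eq, Real.sq_sqrt (by positivity)]
  simp [Fin.sum_univ_three, sq_abs]

lemma norm_cross3_le (a b : E3) : ‖cross3 a b‖ ≤ 4 * ‖a‖ * ‖b‖ := by
  have ha := normsq_eq a
  have hb := normsq_eq b
  have hc := normsq_eq (cross3 a b)
  have e0 : cross3 a b 0 = a 1 * b 2 - a 2 * b 1 := rfl
  have e1 : cross3 a b 1 = a 2 * b 0 - a 0 * b 2 := rfl
  have e2 : cross3 a b 2 = a 0 * b 1 - a 1 * b 0 := rfl
  rw [e0, e1, e2] at hc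
  have key : ‖cross3 a b‖ ^ 2 ≤ (4 * ‖a‖ * ‖b‖) ^ 2 := by
    have h2 : (4 * ‖a‖ * ‖b‖) ^ 2 = 16 * (‖a‖^2 * ‖b‖^2) := by ring
    rw [hc, h2, ha, hb]
    nlinarith [sq_nonneg (a 1 * b 2 + a 2 * b 1), sq_nonneg (a 2 * b 0 + a 0 * b 2),
      sq_nonneg (a 0 * b 1 + a 1 * b 0), sq_nonneg (a 0 * b 0), sq_nonneg (a 1 * b 1),
      sq_nonneg (a 2 * b 2), sq_nonneg (a 0 * b 1), sq_nonneg (a 1 * b 0),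
      mul_nonneg (mul_nonneg (sq_nonneg (a 0)) (sq_nonneg (b 0))) (le_refl (0:ℝ))]
  have h1 : (0:ℝ) ≤ ‖cross3 a b‖ := norm_nonneg _
  have h2 : (0:ℝ) ≤ 4 * ‖a‖ * ‖b‖ := by positivity
  nlinarith

lemma continuous_cross3 : Continuous fun p : E3 × E3 => cross3 p.1 p.2 := by
  have h : ∀ j : Fin 3, Continuous fun p : E3 × E3 => p.1 j := fun j =>
    ((EuclideanSpace.proj j : E3 →L[ℝ] ℝ).continuous).comp continuous_fst
  have h2 : ∀ j : Fin 3, Continuous fun p : E3 × E3 => p.2 j := fun j =>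
    ((EuclideanSpace.proj j : E3 →L[ℝ] ℝ).continuous).comp continuous_snd
  unfold cross3
  apply (PiLp.continuous_toLp (p := 2) (β := fun _ : Fin 3 => ℝ)).comp
  apply continuous_pi
  intro j
  fin_cases j
  · exact (((h 1).mul (h2 2)).sub ((h 2).mul (h2 1)))
  · exact (((h 2).mul (h2 0)).sub ((h 0).mul (h2 2)))
  · exact (((h 0).mul (h2 1)).sub ((h 1).mul (h2 0)))

noncomputable def crossL (b : E3) : E3 →L[ℝ] E3 :=
  LinearMap.toContinuousLinearMap
    { toFun := fun a => cross3 a b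
      map_add' := fun x y => cross3_add_left x y b
      map_smul' := fun r x => cross3_smul_left r x b }

lemma crossL_apply (b a : E3) : crossL b a = cross3 a b := rfl

lemma integral_cross3_const {α : Type*} [MeasurableSpace α] {μ : Measure α}
    (h : α → E3) (hint : Integrable h μ) (b : E3) :
    ∫ u, cross3 (h u) b ∂μ = cross3 (∫ u, h u ∂μ) b := by
  rw [← crossL_apply, ← ContinuousLinearMap.integral_comp_comm (crossL b) hint]
  simp [crossL_apply]

-- key L1-L2 estimate
lemma integral_norm_le_sqrt_mul {μ : Measure ℝ} [IsFiniteMeasure μ]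
    (f : ℝ → E3) (hf : MemLp f 2 μ) :
    ∫ u, ‖f u‖ ∂μ ≤ Real.sqrt (μ Set.univ).toReal * (eLpNorm f 2 μ).toReal := by
  have hf1 : MemLp f 1 μ := hf.mono_exponent (by norm_num)
  have heq : ∫ u, ‖f u‖ ∂μ = (eLpNorm f 1 μ).toReal := by
    rw [eLpNorm_one_eq_lintegral_enorm,
      integral_norm_eq_lintegral_enorm hf.aestronglyMeasurable]
  rw [heq]
  have hpq : (1:ℝ≥0∞) ≤ 2 := by norm_num
  have hle := eLpNorm_le_eLpNorm_mul_rpow_measure_univ (p := 1) (q := 2)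
    hpq hf.aestronglyMeasurable
  have hexp : 1 / (1:ℝ≥0∞).toReal - 1 / (2:ℝ≥0∞).toReal = (1/2 : ℝ) := by norm_num
  rw [hexp] at hle
  have hfin1 : eLpNorm f 2 μ ≠ ⊤ := hf.eLpNorm_ne_top
  have hfin2 : μ Set.univ ^ (1/2:ℝ) ≠ ⊤ := by
    apply ENNReal.rpow_ne_top_of_nonneg (by norm_num)
    exact measure_ne_top μ _
  calc (eLpNorm f 1 μ).toReal ≤ (eLpNorm f 2 μ * μ Set.univ ^ (1/2:ℝ)).toReal := by
        apply ENNReal.toReal_mono _ hle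
        exact ENNReal.mul_ne_top hfin1 hfin2
    _ = Real.sqrt (μ Set.univ).toReal * (eLpNorm f 2 μ).toReal := by
        rw [ENNReal.toReal_mul, mul_comm]
        congr 1
        rw [← ENNReal.toReal_rpow, Real.sqrt_eq_rpow]

section
variable {L : ℝ}

instance fin_restrict (L : ℝ) : IsFiniteMeasure (volume.restrict (Set.Ioc (0:ℝ) L)) := by
  constructor
  rw [Measure.restrict_apply_univ]
  exact lt_of_le_of_lt (le_of_eq (Real.volume_Ioc)) (by simp)

lemma univ_toReal (hL : 0 ≤ L) :
    ((volume.restrict (Set.Ioc (0:ℝ) L)) Set.univ).toReal = L := by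
  rw [Measure.restrict_apply_univ, Real.volume_Ioc, ENNReal.toReal_ofReal (by linarith)]
  ring

lemma memLp_integrableOn {f : ℝ → E3} (hf : MemLp f 2 (volume.restrict (Set.Ioc (0:ℝ) L))) :
    IntegrableOn f (Set.Ioc 0 L) :=
  hf.integrable (by norm_num)

lemma memLp_integrableOn_Icc {f : ℝ → E3}
    (hf : MemLp f 2 (volume.restrict (Set.Ioc (0:ℝ) L))) :
    IntegrableOn f (Set.Icc 0 L) :=
  (integrableOn_Icc_iff_integrableOn_Ioc).2 (memLp_integrableOn hf)

lemma memLp_sq_integrable {f : ℝ → E3}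
    (hf : MemLp f 2 (volume.restrict (Set.Ioc (0:ℝ) L))) :
    IntegrableOn (fun s => ‖f s‖ ^ 2) (Set.Ioc 0 L) := by
  have h := hf.integrable_norm_rpow (by norm_num) (by norm_num)
  have : (2:ℝ≥0∞).toReal = (2:ℝ) := by norm_num
  rw [this] at h
  apply h.congr
  filter_upwards with s
  rw [← Real.rpow_natCast ‖f s‖ 2]
  norm_num

lemma setIntegral_norm_le (hL : 0 ≤ L) {f : ℝ → E3}
    (hf : MemLp f 2 (volume.restrict (Set.Ioc (0:ℝ) L))) {r : ℝ} (hr : r ≤ L) :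
    ∫ u in Set.Ioc 0 r, ‖f u‖ ≤
      Real.sqrt L * (eLpNorm f 2 (volume.restrict (Set.Ioc (0:ℝ) L))).toReal := by
  have h1 : ∫ u in Set.Ioc 0 r, ‖f u‖ ≤ ∫ u in Set.Ioc 0 L, ‖f u‖ := by
    apply setIntegral_mono_set (memLp_integrableOn hf).norm
    · filter_upwards with u using norm_nonneg _
    · exact HasSubset.Subset.eventuallyLE (Set.Ioc_subset_Ioc le_rfl hr)
  refine h1.trans ?_
  have := integral_norm_le_sqrt_mul f hf
  rwa [univ_toReal hL] at this

lemma subint_congr {f g : ℝ → E3}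
    (h : f =ᵐ[volume.restrict (Set.Ioc (0:ℝ) L)] g) {s : ℝ} (hs : s ≤ L) :
    ∫ u in Set.Ioc 0 s, f u = ∫ u in Set.Ioc 0 s, g u := by
  apply integral_congr_ae
  exact ae_restrict_of_ae_restrict_of_subset (Set.Ioc_subset_Ioc le_rfl hs) h

lemma Idiff_le (hL : 0 ≤ L) (f g : Lp E3 2 (volume.restrict (Set.Ioc (0:ℝ) L)))
    {s : ℝ} (hs : s ≤ L) :
    ‖(∫ u in Set.Ioc 0 s, (f : ℝ → E3) u) - ∫ u in Set.Ioc 0 s, (g : ℝ → E3) u‖ ≤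
      Real.sqrt L * dist f g := by
  have hint_f : IntegrableOn (f : ℝ → E3) (Set.Ioc 0 s) :=
    (memLp_integrableOn (Lp.memLp f)).mono_set (Set.Ioc_subset_Ioc le_rfl hs)
  have hint_g : IntegrableOn (g : ℝ → E3) (Set.Ioc 0 s) :=
    (memLp_integrableOn (Lp.memLp g)).mono_set (Set.Ioc_subset_Ioc le_rfl hs)
  rw [← integral_sub hint_f hint_g]
  have hcoe : ∫ u in Set.Ioc 0 s, ((f : ℝ → E3) u - (g : ℝ → E3) u) =
      ∫ u in Set.Ioc 0 s, ((f - g : Lp E3 2 _) : ℝ → E3) u := by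
    apply subint_congr _ hs
    filter_upwards [Lp.coeFn_sub f g] with u hu
    rw [hu]; rfl
  rw [hcoe]
  calc ‖∫ u in Set.Ioc 0 s, ((f - g : Lp E3 2 _) : ℝ → E3) u‖
      ≤ ∫ u in Set.Ioc 0 s, ‖((f - g : Lp E3 2 _) : ℝ → E3) u‖ :=
        norm_integral_le_integral_norm _
    _ ≤ Real.sqrt L * (eLpNorm ((f - g : Lp E3 2 _) : ℝ → E3) 2
          (volume.restrict (Set.Ioc (0:ℝ) L))).toReal :=
        setIntegral_norm_le hL (Lp.memLp _) hs
    _ = Real.sqrt L * dist f g := by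
        rw [Lp.dist_def, eLpNorm_congr_ae (Lp.coeFn_sub f g)]

lemma cont_primitive {f : ℝ → E3}
    (hf : MemLp f 2 (volume.restrict (Set.Ioc (0:ℝ) L))) :
    ContinuousOn (fun s => ∫ u in Set.Ioc 0 s, f u) (Set.Icc 0 L) :=
  intervalIntegral.continuousOn_primitive (memLp_integrableOn_Icc hf)
end

lemma cross3_sub_right (a b c : E3) : cross3 a (b - c) = cross3 a b - cross3 a c := by
  have h := cross3_add_right a (b - c) c
  simp only [sub_add_cancel] at h
  rw [h]; abel

noncomputable def primI (f : ℝ → E3) (s : ℝ) : E3 := ∫ u in Set.Ioc 0 s, f u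

section
variable {L : ℝ} {t : ℝ → E3}

-- continuity of s ↦ cross3 (t s) (primI f s)
lemma cont_crossI (htc : ContinuousOn t (Set.Icc 0 L)) {f : ℝ → E3}
    (hf : MemLp f 2 (volume.restrict (Set.Ioc (0:ℝ) L))) :
    ContinuousOn (fun s => cross3 (t s) (primI f s)) (Set.Icc 0 L) :=
  continuous_cross3.comp_continuousOn (htc.prodMk (cont_primitive hf))

lemma int_crossI_Icc (htc : ContinuousOn t (Set.Icc 0 L)) {f : ℝ → E3}
    (hf : MemLp f 2 (volume.restrict (Set.Ioc (0:ℝ) L))) :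
    IntegrableOn (fun s => cross3 (t s) (primI f s)) (Set.Icc 0 L) :=
  (cont_crossI htc hf).integrableOn_Icc

-- pointwise bound for cross difference
lemma crossI_diff_bound (hL : 0 ≤ L) (htc : ContinuousOn t (Set.Icc 0 L))
    (htu : ∀ s ∈ Set.Icc 0 L, ‖t s‖ = 1)
    (f g : Lp E3 2 (volume.restrict (Set.Ioc (0:ℝ) L))) {s : ℝ} (hs : s ∈ Set.Icc 0 L) :
    ‖cross3 (t s) (primI (f : ℝ → E3) s) - cross3 (t s) (primI (g : ℝ → E3) s)‖ ≤
      4 * (Real.sqrt L * dist f g) := by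
  rw [← cross3_sub_right]
  calc ‖cross3 (t s) (primI (f : ℝ → E3) s - primI (g : ℝ → E3) s)‖
      ≤ 4 * ‖t s‖ * ‖primI (f : ℝ → E3) s - primI (g : ℝ → E3) s‖ := norm_cross3_le _ _
    _ ≤ 4 * (Real.sqrt L * dist f g) := by
        rw [htu s hs, mul_one]
        have := Idiff_le hL f g hs.2
        have h4 : (0:ℝ) ≤ 4 := by norm_num
        calc 4 * ‖primI (f : ℝ → E3) s - primI (g : ℝ → E3) s‖
            ≤ 4 * (Real.sqrt L * dist f g) := by
              apply mul_le_mul_of_nonneg_left _ h4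
              exact this

-- integral of cross difference bound, over Ioc 0 r
lemma int_crossI_diff_bound (hL : 0 ≤ L) (htc : ContinuousOn t (Set.Icc 0 L))
    (htu : ∀ s ∈ Set.Icc 0 L, ‖t s‖ = 1)
    (f g : Lp E3 2 (volume.restrict (Set.Ioc (0:ℝ) L))) {r : ℝ} (hr : r ∈ Set.Icc 0 L) :
    ‖∫ s in Set.Ioc 0 r, (cross3 (t s) (primI (f : ℝ → E3) s)
        - cross3 (t s) (primI (g : ℝ → E3) s))‖ ≤
      (4 * (Real.sqrt L * dist f g)) * L := by
  have hsub : Set.Ioc (0:ℝ) r ⊆ Set.Icc 0 L := fun u hu =>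
    ⟨le_of_lt hu.1, le_trans hu.2 hr.2⟩
  have hmeas : AEStronglyMeasurable
      (fun s => cross3 (t s) (primI (f : ℝ → E3) s) - cross3 (t s) (primI (g : ℝ → E3) s))
      (volume.restrict (Set.Ioc 0 r)) := by
    apply ContinuousOn.aestronglyMeasurable _ measurableSet_Ioc
    exact ((cont_crossI htc (Lp.memLp f)).sub (cont_crossI htc (Lp.memLp g))).mono hsub
  have hb := norm_setIntegral_le_of_norm_le_const (μ := volume) (s := Set.Ioc 0 r)
    (C := 4 * (Real.sqrt L * dist f g)) (by simp)
    (fun x hx => crossI_diff_bound hL htc htu f g (hsub hx))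
  refine hb.trans ?_
  have hC : (0:ℝ) ≤ 4 * (Real.sqrt L * dist f g) := by positivity
  apply mul_le_mul_of_nonneg_left _ hC
  rw [Real.volume_real_Ioc]
  exact max_le (by linarith [hr.2]) hL
end

lemma continuous_of_lip {X Y : Type*} [PseudoMetricSpace X] [PseudoMetricSpace Y]
    {F : X → Y} (C : ℝ)
    (h : ∀ x y, dist (F x) (F y) ≤ C * dist x y) : Continuous F := by
  have hC : ∀ x y, dist (F x) (F y) ≤ (max C 0) * dist x y := fun x y =>
    (h x y).trans (mul_le_mul_of_nonneg_right (le_max_left _ _) dist_nonneg)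
  exact (LipschitzWith.of_dist_le_mul (K := ⟨max C 0, le_max_right _ _⟩) hC).continuous

section
variable {L : ℝ} {t : ℝ → E3}

noncomputable abbrev Lp2 (L : ℝ) := Lp E3 2 (volume.restrict (Set.Ioc (0:ℝ) L))

noncomputable def G1 (L : ℝ) (t : ℝ → E3) (pq : Lp2 L × Lp2 L) : E3 :=
  ∫ s in Set.Ioc 0 L, ((pq.1 : ℝ → E3) s - cross3 (t s) (primI (pq.2 : ℝ → E3) s))

noncomputable def G3 (L : ℝ) (q : Lp2 L) : E3 := primI (q : ℝ → E3) L

noncomputable def G6 (L : ℝ) (q : Lp2 L) : E3 := ∫ s in Set.Ioc 0 L, primI (q : ℝ → E3) s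

noncomputable def G5 (L : ℝ) (t : ℝ → E3) (pq : Lp2 L × Lp2 L) : E3 :=
  ∫ s in Set.Ioc 0 L,
    (∫ u in Set.Ioc 0 s, ((pq.1 : ℝ → E3) u - cross3 (t u) (primI (pq.2 : ℝ → E3) u)))

lemma G1_split (hL : 0 ≤ L) (htc : ContinuousOn t (Set.Icc 0 L)) (pq : Lp2 L × Lp2 L)
    {r : ℝ} (hr : r ∈ Set.Icc 0 L) :
    ∫ u in Set.Ioc 0 r, ((pq.1 : ℝ → E3) u - cross3 (t u) (primI (pq.2 : ℝ → E3) u))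
      = (∫ u in Set.Ioc 0 r, (pq.1 : ℝ → E3) u)
        - ∫ u in Set.Ioc 0 r, cross3 (t u) (primI (pq.2 : ℝ → E3) u) := by
  apply integral_sub
  · exact (memLp_integrableOn (Lp.memLp pq.1)).mono_set (Set.Ioc_subset_Ioc le_rfl hr.2)
  · exact (int_crossI_Icc htc (Lp.memLp pq.2)).mono_set
      (fun u hu => ⟨le_of_lt hu.1, hu.2.trans hr.2⟩)

lemma contG3 (hL : 0 ≤ L) : Continuous (G3 L) := by
  apply continuous_of_lip (Real.sqrt L)
  intro f g
  rw [dist_eq_norm]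
  exact Idiff_le hL f g le_rfl

lemma contG1 (hL : 0 ≤ L) (htc : ContinuousOn t (Set.Icc 0 L))
    (htu : ∀ s ∈ Set.Icc 0 L, ‖t s‖ = 1) : Continuous (G1 L t) := by
  apply continuous_of_lip (Real.sqrt L + 4 * Real.sqrt L * L)
  intro x y
  rw [dist_eq_norm]
  have hmem : L ∈ Set.Icc (0:ℝ) L := ⟨hL, le_rfl⟩
  rw [G1, G1, G1_split hL htc x hmem, G1_split hL htc y hmem]
  have h1 := Idiff_le hL x.1 y.1 (le_refl L)
  have h2 := int_crossI_diff_bound hL htc htu x.2 y.2 hmem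
  have e : (∫ s in Set.Ioc 0 L, (cross3 (t s) (primI ((x.2 : Lp2 L) : ℝ → E3) s)
        - cross3 (t s) (primI ((y.2 : Lp2 L) : ℝ → E3) s)))
      = (∫ s in Set.Ioc 0 L, cross3 (t s) (primI ((x.2 : Lp2 L) : ℝ → E3) s))
        - ∫ s in Set.Ioc 0 L, cross3 (t s) (primI ((y.2 : Lp2 L) : ℝ → E3) s) := by
    apply integral_sub
    · exact (int_crossI_Icc htc (Lp.memLp x.2)).mono_set Set.Ioc_subset_Icc_self
    · exact (int_crossI_Icc htc (Lp.memLp y.2)).mono_set Set.Ioc_subset_Icc_self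
  rw [e] at h2
  have hd1 : dist x.1 y.1 ≤ dist x y := by rw [Prod.dist_eq]; exact le_max_left _ _
  have hd2 : dist x.2 y.2 ≤ dist x y := by rw [Prod.dist_eq]; exact le_max_right _ _
  have hnn : (0:ℝ) ≤ Real.sqrt L := Real.sqrt_nonneg L
  calc ‖((∫ u in Set.Ioc 0 L, ((x.1 : Lp2 L) : ℝ → E3) u)
          - ∫ s in Set.Ioc 0 L, cross3 (t s) (primI ((x.2 : Lp2 L) : ℝ → E3) s))
        - ((∫ u in Set.Ioc 0 L, ((y.1 : Lp2 L) : ℝ → E3) u)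
          - ∫ s in Set.Ioc 0 L, cross3 (t s) (primI ((y.2 : Lp2 L) : ℝ → E3) s))‖
      ≤ ‖(∫ u in Set.Ioc 0 L, ((x.1 : Lp2 L) : ℝ → E3) u)
          - ∫ u in Set.Ioc 0 L, ((y.1 : Lp2 L) : ℝ → E3) u‖
        + ‖(∫ s in Set.Ioc 0 L, cross3 (t s) (primI ((x.2 : Lp2 L) : ℝ → E3) s))
          - ∫ s in Set.Ioc 0 L, cross3 (t s) (primI ((y.2 : Lp2 L) : ℝ → E3) s)‖ := by
        have := norm_sub_le ((∫ u in Set.Ioc 0 L, ((x.1 : Lp2 L) : ℝ → E3) u)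
          - ∫ u in Set.Ioc 0 L, ((y.1 : Lp2 L) : ℝ → E3) u)
          ((∫ s in Set.Ioc 0 L, cross3 (t s) (primI ((x.2 : Lp2 L) : ℝ → E3) s))
          - ∫ s in Set.Ioc 0 L, cross3 (t s) (primI ((y.2 : Lp2 L) : ℝ → E3) s))
        convert this using 2
        exacts [rfl, by abel]
    _ ≤ Real.sqrt L * dist x.1 y.1 + (4 * (Real.sqrt L * dist x.2 y.2)) * L :=
        add_le_add h1 h2
    _ ≤ Real.sqrt L * dist x y + (4 * (Real.sqrt L * dist x y)) * L := by
        apply add_le_add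
        · exact mul_le_mul_of_nonneg_left hd1 hnn
        · apply mul_le_mul_of_nonneg_right _ hL
          apply mul_le_mul_of_nonneg_left _ (by norm_num : (0:ℝ) ≤ 4)
          exact mul_le_mul_of_nonneg_left hd2 hnn
    _ = (Real.sqrt L + 4 * Real.sqrt L * L) * dist x y := by ring

lemma contG6 (hL : 0 ≤ L) : Continuous (G6 L) := by
  apply continuous_of_lip (Real.sqrt L * L)
  intro x y
  rw [dist_eq_norm, G6, G6]
  have hix : IntegrableOn (fun s => primI ((x : Lp2 L) : ℝ → E3) s) (Set.Ioc 0 L) :=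
    ((cont_primitive (Lp.memLp x)).integrableOn_Icc).mono_set Set.Ioc_subset_Icc_self
  have hiy : IntegrableOn (fun s => primI ((y : Lp2 L) : ℝ → E3) s) (Set.Ioc 0 L) :=
    ((cont_primitive (Lp.memLp y)).integrableOn_Icc).mono_set Set.Ioc_subset_Icc_self
  rw [← integral_sub hix hiy]
  have hmeas : AEStronglyMeasurable
      (fun s => primI ((x : Lp2 L) : ℝ → E3) s - primI ((y : Lp2 L) : ℝ → E3) s)
      (volume.restrict (Set.Ioc 0 L)) :=
    (((cont_primitive (Lp.memLp x)).sub (cont_primitive (Lp.memLp y))).mono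
      Set.Ioc_subset_Icc_self).aestronglyMeasurable measurableSet_Ioc
  have hb := norm_setIntegral_le_of_norm_le_const (μ := volume) (s := Set.Ioc 0 L)
    (C := Real.sqrt L * dist x y) (by simp)
    (fun s hs => Idiff_le hL x y hs.2)
  refine hb.trans ?_
  rw [Real.volume_real_Ioc, max_eq_left (by linarith)]
  have : L - 0 = L := by ring
  rw [this]; ring_nf; try rfl

lemma contIdvAux (htc : ContinuousOn t (Set.Icc 0 L)) (z : Lp2 L × Lp2 L) :
    ContinuousOn (fun s => ∫ u in Set.Ioc 0 s,
      ((z.1 : ℝ → E3) u - cross3 (t u) (primI (z.2 : ℝ → E3) u))) (Set.Icc 0 L) := by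
  apply intervalIntegral.continuousOn_primitive
  exact (memLp_integrableOn_Icc (Lp.memLp z.1)).sub (int_crossI_Icc htc (Lp.memLp z.2))

lemma contG5 (hL : 0 ≤ L) (htc : ContinuousOn t (Set.Icc 0 L))
    (htu : ∀ s ∈ Set.Icc 0 L, ‖t s‖ = 1) : Continuous (G5 L t) := by
  apply continuous_of_lip ((Real.sqrt L + 4 * Real.sqrt L * L) * L)
  intro x y
  rw [dist_eq_norm, G5, G5]
  have hix : IntegrableOn (fun s => ∫ u in Set.Ioc 0 s,
      ((x.1 : ℝ → E3) u - cross3 (t u) (primI (x.2 : ℝ → E3) u))) (Set.Ioc 0 L) :=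
    ((contIdvAux htc x).integrableOn_Icc).mono_set Set.Ioc_subset_Icc_self
  have hiy : IntegrableOn (fun s => ∫ u in Set.Ioc 0 s,
      ((y.1 : ℝ → E3) u - cross3 (t u) (primI (y.2 : ℝ → E3) u))) (Set.Ioc 0 L) :=
    ((contIdvAux htc y).integrableOn_Icc).mono_set Set.Ioc_subset_Icc_self
  rw [← integral_sub hix hiy]
  have hmeas : AEStronglyMeasurable
      (fun s => (∫ u in Set.Ioc 0 s,
          ((x.1 : ℝ → E3) u - cross3 (t u) (primI (x.2 : ℝ → E3) u)))
        - ∫ u in Set.Ioc 0 s,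
          ((y.1 : ℝ → E3) u - cross3 (t u) (primI (y.2 : ℝ → E3) u)))
      (volume.restrict (Set.Ioc 0 L)) :=
    (((contIdvAux htc x).sub (contIdvAux htc y)).mono
      Set.Ioc_subset_Icc_self).aestronglyMeasurable measurableSet_Ioc
  have hd1 : dist x.1 y.1 ≤ dist x y := by rw [Prod.dist_eq]; exact le_max_left _ _
  have hd2 : dist x.2 y.2 ≤ dist x y := by rw [Prod.dist_eq]; exact le_max_right _ _
  have hnn : (0:ℝ) ≤ Real.sqrt L := Real.sqrt_nonneg L
  have hptw : ∀ s ∈ Set.Ioc (0:ℝ) L,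
      ‖(∫ u in Set.Ioc 0 s, ((x.1 : ℝ → E3) u - cross3 (t u) (primI (x.2 : ℝ → E3) u)))
        - ∫ u in Set.Ioc 0 s, ((y.1 : ℝ → E3) u - cross3 (t u) (primI (y.2 : ℝ → E3) u))‖
        ≤ (Real.sqrt L + 4 * Real.sqrt L * L) * dist x y := by
    intro s hs
    have hsIcc : s ∈ Set.Icc (0:ℝ) L := ⟨le_of_lt hs.1, hs.2⟩
    rw [G1_split hL htc x hsIcc, G1_split hL htc y hsIcc]
    have h1 := Idiff_le hL x.1 y.1 hs.2
    have h2 := int_crossI_diff_bound hL htc htu x.2 y.2 hsIcc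
    have e : (∫ u in Set.Ioc 0 s, (cross3 (t u) (primI ((x.2 : Lp2 L) : ℝ → E3) u)
          - cross3 (t u) (primI ((y.2 : Lp2 L) : ℝ → E3) u)))
        = (∫ u in Set.Ioc 0 s, cross3 (t u) (primI ((x.2 : Lp2 L) : ℝ → E3) u))
          - ∫ u in Set.Ioc 0 s, cross3 (t u) (primI ((y.2 : Lp2 L) : ℝ → E3) u) := by
      apply integral_sub
      · exact (int_crossI_Icc htc (Lp.memLp x.2)).mono_set
          (fun u hu => ⟨le_of_lt hu.1, hu.2.trans hs.2⟩)
      · exact (int_crossI_Icc htc (Lp.memLp y.2)).mono_set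
          (fun u hu => ⟨le_of_lt hu.1, hu.2.trans hs.2⟩)
    rw [e] at h2
    calc ‖((∫ u in Set.Ioc 0 s, ((x.1 : Lp2 L) : ℝ → E3) u)
            - ∫ u in Set.Ioc 0 s, cross3 (t u) (primI ((x.2 : Lp2 L) : ℝ → E3) u))
          - ((∫ u in Set.Ioc 0 s, ((y.1 : Lp2 L) : ℝ → E3) u)
            - ∫ u in Set.Ioc 0 s, cross3 (t u) (primI ((y.2 : Lp2 L) : ℝ → E3) u))‖
        ≤ ‖(∫ u in Set.Ioc 0 s, ((x.1 : Lp2 L) : ℝ → E3) u)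
            - ∫ u in Set.Ioc 0 s, ((y.1 : Lp2 L) : ℝ → E3) u‖
          + ‖(∫ u in Set.Ioc 0 s, cross3 (t u) (primI ((x.2 : Lp2 L) : ℝ → E3) u))
            - ∫ u in Set.Ioc 0 s, cross3 (t u) (primI ((y.2 : Lp2 L) : ℝ → E3) u)‖ := by
          have := norm_sub_le ((∫ u in Set.Ioc 0 s, ((x.1 : Lp2 L) : ℝ → E3) u)
            - ∫ u in Set.Ioc 0 s, ((y.1 : Lp2 L) : ℝ → E3) u)
            ((∫ u in Set.Ioc 0 s, cross3 (t u) (primI ((x.2 : Lp2 L) : ℝ → E3) u))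
            - ∫ u in Set.Ioc 0 s, cross3 (t u) (primI ((y.2 : Lp2 L) : ℝ → E3) u))
          convert this using 2
          exacts [rfl, by abel]
      _ ≤ Real.sqrt L * dist x.1 y.1 + (4 * (Real.sqrt L * dist x.2 y.2)) * L :=
          add_le_add h1 h2
      _ ≤ Real.sqrt L * dist x y + (4 * (Real.sqrt L * dist x y)) * L := by
          apply add_le_add
          · exact mul_le_mul_of_nonneg_left hd1 hnn
          · apply mul_le_mul_of_nonneg_right _ hL
            apply mul_le_mul_of_nonneg_left _ (by norm_num : (0:ℝ) ≤ 4)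
            exact mul_le_mul_of_nonneg_left hd2 hnn
      _ = (Real.sqrt L + 4 * Real.sqrt L * L) * dist x y := by ring
  have hb := norm_setIntegral_le_of_norm_le_const (μ := volume) (s := Set.Ioc 0 L)
    (C := (Real.sqrt L + 4 * Real.sqrt L * L) * dist x y) (by simp) hptw
  refine hb.trans ?_
  rw [Real.volume_real_Ioc, max_eq_left (by linarith)]
  have : L - 0 = L := by ring
  rw [this]; ring_nf; rfl
end

lemma primI_zero (f : ℝ → E3) : primI f 0 = 0 := by
  rw [primI, Set.Ioc_self, Measure.restrict_empty, integral_zero_measure]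

section
variable {L : ℝ} {τ : ℝ → E3}

noncomputable def wF (L : ℝ) (Q : Lp2 L) (b : E3) : ℝ → E3 :=
  fun s => b + primI (Q : ℝ → E3) s
noncomputable def dvF (L : ℝ) (τ : ℝ → E3) (P Q : Lp2 L) (b : E3) : ℝ → E3 :=
  fun s => (P : ℝ → E3) s - cross3 (τ s) (wF L Q b s)
noncomputable def vF (L : ℝ) (τ : ℝ → E3) (P Q : Lp2 L) (a b : E3) : ℝ → E3 :=
  fun s => a + ∫ u in Set.Ioc 0 s, dvF L τ P Q b u

lemma wF_zero (Q : Lp2 L) (b : E3) : wF L Q b 0 = b := by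
  simp [wF, primI_zero]
lemma vF_zero (P Q : Lp2 L) (a b : E3) : vF L τ P Q a b 0 = a := by
  have : Set.Ioc (0:ℝ) 0 = ∅ := Set.Ioc_self 0
  simp [vF, this]

lemma H1On_wF (Q : Lp2 L) (b : E3) : H1On L (wF L Q b) (Q : ℝ → E3) := by
  refine ⟨continuousOn_const.add (cont_primitive (Lp.memLp Q)), ⟨memLp_integrableOn (Lp.memLp Q), memLp_sq_integrable (Lp.memLp Q)⟩, ?_⟩
  intro x hx
  rw [wF_zero]
  rfl

-- integrability facts
lemma int_cross_const (htc : ContinuousOn τ (Set.Icc 0 L)) (b : E3) :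
    IntegrableOn (fun s => cross3 (τ s) b) (Set.Icc 0 L) :=
  (continuous_cross3.comp_continuousOn (htc.prodMk continuousOn_const)).integrableOn_Icc

lemma int_dvF_Icc (htc : ContinuousOn τ (Set.Icc 0 L)) (P Q : Lp2 L) (b : E3) :
    IntegrableOn (dvF L τ P Q b) (Set.Icc 0 L) := by
  have h : dvF L τ P Q b = fun s =>
      ((P : ℝ → E3) s - cross3 (τ s) (primI (Q : ℝ → E3) s)) - cross3 (τ s) b := by
    funext s
    rw [dvF, wF, cross3_add_right]
    abel
  rw [h]
  exact ((memLp_integrableOn_Icc (Lp.memLp P)).sub (int_crossI_Icc htc (Lp.memLp Q))).sub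
    (int_cross_const htc b)

-- the key integral formula for dvF on Ioc 0 r
lemma int_dvF (hL : 0 ≤ L) (htc : ContinuousOn τ (Set.Icc 0 L)) (P Q : Lp2 L) (b : E3)
    {r : ℝ} (hr : r ∈ Set.Icc 0 L) :
    ∫ u in Set.Ioc 0 r, dvF L τ P Q b u
      = (∫ u in Set.Ioc 0 r, ((P : ℝ → E3) u - cross3 (τ u) (primI (Q : ℝ → E3) u)))
        - cross3 (∫ u in Set.Ioc 0 r, τ u) b := by
  have hsub : Set.Ioc (0:ℝ) r ⊆ Set.Icc 0 L := fun u hu => ⟨le_of_lt hu.1, hu.2.trans hr.2⟩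
  have h : ∀ u, dvF L τ P Q b u =
      ((P : ℝ → E3) u - cross3 (τ u) (primI (Q : ℝ → E3) u)) - cross3 (τ u) b := by
    intro u
    rw [dvF, wF, cross3_add_right]
    abel
  rw [integral_congr_ae (Filter.Eventually.of_forall h)]
  have h1 : IntegrableOn (fun u => (P : ℝ → E3) u - cross3 (τ u) (primI (Q : ℝ → E3) u))
      (Set.Icc 0 L) :=
    (memLp_integrableOn_Icc (Lp.memLp P)).sub (int_crossI_Icc htc (Lp.memLp Q))
  rw [integral_sub (h1.mono_set hsub) ((int_cross_const htc b).mono_set hsub)]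
  congr 1
  exact integral_cross3_const τ ((htc.integrableOn_Icc).mono_set hsub) b

lemma H1On_vF (hL : 0 ≤ L) (htc : ContinuousOn τ (Set.Icc 0 L)) (P Q : Lp2 L) (a b : E3) :
    H1On L (vF L τ P Q a b) (dvF L τ P Q b) := by
  refine ⟨?_, ⟨(int_dvF_Icc htc P Q b).mono_set Set.Ioc_subset_Icc_self, ?_⟩, ?_⟩
  · exact continuousOn_const.add
      (intervalIntegral.continuousOn_primitive (int_dvF_Icc htc P Q b))
  · -- square-integrability of dvF
    obtain ⟨C, hC⟩ := (isCompact_Icc (a := (0:ℝ)) (b := L)).exists_bound_of_continuousOn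
      (continuous_cross3.comp_continuousOn (htc.prodMk
        (continuousOn_const.add (cont_primitive (Lp.memLp Q)))))
    have hCnn : 0 ≤ C := (norm_nonneg _).trans (hC 0 ⟨le_rfl, hL⟩)
    have hbound : ∀ s ∈ Set.Ioc (0:ℝ) L, ‖‖dvF L τ P Q b s‖ ^ 2‖ ≤
        2 * ‖(P : ℝ → E3) s‖ ^ 2 + 2 * C ^ 2 := by
      intro s hs
      have hsI : s ∈ Set.Icc (0:ℝ) L := ⟨le_of_lt hs.1, hs.2⟩
      have h1 : ‖dvF L τ P Q b s‖ ≤ ‖(P : ℝ → E3) s‖ + C := by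
        rw [dvF]
        refine (norm_sub_le _ _).trans ?_
        have h2 : ‖cross3 (τ s) (wF L Q b s)‖ ≤ C := by
          have := hC s hsI
          simpa [wF, primI] using this
        linarith
      rw [Real.norm_eq_abs, abs_of_nonneg (by positivity)]
      have h2 : ‖dvF L τ P Q b s‖ ^ 2 ≤ (‖(P : ℝ → E3) s‖ + C) ^ 2 :=
        pow_le_pow_left₀ (norm_nonneg _) h1 2
      nlinarith [sq_nonneg (‖(P : ℝ → E3) s‖ - C)]
    have hmeas : AEStronglyMeasurable (fun s => ‖dvF L τ P Q b s‖ ^ 2)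
        (volume.restrict (Set.Ioc 0 L)) := by
      have h := ((int_dvF_Icc htc P Q b).mono_set
        (Set.Ioc_subset_Icc_self)).aestronglyMeasurable
      exact (h.norm.pow 2)
    apply Integrable.mono' (g := fun s => 2 * ‖(P : ℝ → E3) s‖ ^ 2 + 2 * C ^ 2)
    · exact ((memLp_sq_integrable (Lp.memLp P)).const_mul 2).add (integrableOn_const
        (by simp [Real.volume_Ioc]))
    · exact hmeas
    · exact (ae_restrict_iff' measurableSet_Ioc).2 (Filter.Eventually.of_forall hbound)
  · intro x hx
    rw [vF_zero]
    rfl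
end

section
variable {L : ℝ} {τ : ℝ → E3}

-- value of vF at r ∈ Icc, in terms of G-type integrals
lemma vF_eval (hL : 0 ≤ L) (htc : ContinuousOn τ (Set.Icc 0 L)) (P Q : Lp2 L) (a b : E3) :
    vF L τ P Q a b L = a + G1 L τ (P, Q) - cross3 (∫ u in Set.Ioc 0 L, τ u) b := by
  rw [vF, int_dvF hL htc P Q b ⟨hL, le_rfl⟩, G1]
  abel

lemma wF_eval (Q : Lp2 L) (b : E3) : wF L Q b L = b + G3 L Q := rfl

-- integral of wF
lemma int_wF (hL : 0 ≤ L) (Q : Lp2 L) (b : E3) :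
    ∫ s in Set.Ioc 0 L, wF L Q b s = L • b + G6 L Q := by
  rw [G6]
  have hint : IntegrableOn (fun s => primI ((Q : Lp2 L) : ℝ → E3) s) (Set.Ioc 0 L) :=
    ((cont_primitive (Lp.memLp Q)).integrableOn_Icc).mono_set Set.Ioc_subset_Icc_self
  have : ∫ s in Set.Ioc 0 L, wF L Q b s
      = (∫ _ in Set.Ioc 0 L, b) + ∫ s in Set.Ioc 0 L, primI ((Q : Lp2 L) : ℝ → E3) s := by
    rw [← integral_add (integrableOn_const (C := b) (μ := volume) (s := Set.Ioc (0:ℝ) L) (by simp [Real.volume_Ioc])) hint]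
    rfl
  rw [this, setIntegral_const]
  congr 2
  rw [Real.volume_real_Ioc, max_eq_left (by linarith)]
  ring

-- integral of vF
lemma int_vF (hL : 0 ≤ L) (htc : ContinuousOn τ (Set.Icc 0 L)) (P Q : Lp2 L) (a b : E3) :
    ∫ s in Set.Ioc 0 L, vF L τ P Q a b s
      = L • a + G5 L τ (P, Q) - cross3 (∫ s in Set.Ioc 0 L, primI τ s) b := by
  have hIcc_int : IntegrableOn (fun s => ∫ u in Set.Ioc 0 s, dvF L τ P Q b u)
      (Set.Ioc 0 L) :=
    ((intervalIntegral.continuousOn_primitive (int_dvF_Icc htc P Q b)).integrableOn_Icc).mono_set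
      Set.Ioc_subset_Icc_self
  have h1 : ∫ s in Set.Ioc 0 L, vF L τ P Q a b s
      = (∫ _ in Set.Ioc 0 L, a) + ∫ s in Set.Ioc 0 L, (∫ u in Set.Ioc 0 s, dvF L τ P Q b u) := by
    rw [← integral_add (integrableOn_const (C := a) (μ := volume) (s := Set.Ioc (0:ℝ) L) (by simp [Real.volume_Ioc])) hIcc_int]
    rfl
  rw [h1, setIntegral_const]
  have h2 : ∀ s ∈ Set.Ioc (0:ℝ) L, (∫ u in Set.Ioc 0 s, dvF L τ P Q b u)
      = (∫ u in Set.Ioc 0 s, ((P : ℝ → E3) u - cross3 (τ u) (primI (Q : ℝ → E3) u)))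
        - cross3 (primI τ s) b := by
    intro s hs
    rw [int_dvF hL htc P Q b ⟨le_of_lt hs.1, hs.2⟩]
    rfl
  rw [setIntegral_congr_fun measurableSet_Ioc h2]
  have hint1 : IntegrableOn (fun s => ∫ u in Set.Ioc 0 s,
      ((P : ℝ → E3) u - cross3 (τ u) (primI (Q : ℝ → E3) u))) (Set.Ioc 0 L) := by
    exact ((intervalIntegral.continuousOn_primitive
      ((memLp_integrableOn_Icc (Lp.memLp P)).sub
        (int_crossI_Icc htc (Lp.memLp Q)))).integrableOn_Icc).mono_set
      Set.Ioc_subset_Icc_self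
  have hcontT : ContinuousOn (fun s => primI τ s) (Set.Icc 0 L) :=
    intervalIntegral.continuousOn_primitive (htc.integrableOn_Icc)
  have hint2 : IntegrableOn (fun s => cross3 (primI τ s) b) (Set.Ioc 0 L) :=
    ((continuous_cross3.comp_continuousOn
      (hcontT.prodMk continuousOn_const)).integrableOn_Icc).mono_set Set.Ioc_subset_Icc_self
  rw [integral_sub hint1 hint2, G5]
  have h3 : ∫ s in Set.Ioc 0 L, cross3 (primI τ s) b
      = cross3 (∫ s in Set.Ioc 0 L, primI τ s) b :=
    integral_cross3_const _ (((hcontT.integrableOn_Icc)).mono_set Set.Ioc_subset_Icc_self) b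
  rw [h3]
  rw [Real.volume_real_Ioc, max_eq_left (by linarith)]
  have : L - 0 = L := by ring
  rw [this]
  abel

-- FORWARD direction helpers
lemma forward_w (hL : 0 ≤ L) {w dw : ℝ → E3} (hw : H1On L w dw) (Q : Lp2 L)
    (hq : (Q : ℝ → E3) =ᵐ[volume.restrict (Set.Ioc (0:ℝ) L)] dw) :
    ∀ s ∈ Set.Icc (0:ℝ) L, w s = wF L Q (w 0) s := by
  intro s hs
  rw [hw.2.2 s hs, wF]
  congr 1
  exact (subint_congr hq hs.2).symm

lemma forward_v (hL : 0 ≤ L) (htc : ContinuousOn τ (Set.Icc 0 L))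
    {v dv w dw : ℝ → E3} (hv : H1On L v dv) (hw : H1On L w dw) (P Q : Lp2 L)
    (hp : (P : ℝ → E3) =ᵐ[volume.restrict (Set.Ioc (0:ℝ) L)]
        fun s => dv s + cross3 (τ s) (w s))
    (hq : (Q : ℝ → E3) =ᵐ[volume.restrict (Set.Ioc (0:ℝ) L)] dw) :
    ∀ s ∈ Set.Icc (0:ℝ) L, v s = vF L τ P Q (v 0) (w 0) s := by
  intro s hs
  rw [hv.2.2 s hs, vF]
  congr 1
  have hdv : dv =ᵐ[volume.restrict (Set.Ioc (0:ℝ) L)]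
      fun u => (P : ℝ → E3) u - cross3 (τ u) (w u) := by
    filter_upwards [hp] with u hu
    rw [hu]; abel
  rw [subint_congr hdv hs.2]
  apply setIntegral_congr_fun measurableSet_Ioc
  intro u hu
  have huIcc : u ∈ Set.Icc (0:ℝ) L := ⟨le_of_lt hu.1, hu.2.trans hs.2⟩
  show (P : ℝ → E3) u - cross3 (τ u) (w u) = (P : ℝ → E3) u - cross3 (τ u) (wF L Q (w 0) u)
  rw [forward_w hL hw Q hq u huIcc]
end

section MainAssembly

abbrev XT (l : Fin nE → ℝ) : Type :=
  (∀ i : Fin nE, Lp E3 2 (volume.restrict (Set.Ioc 0 (l i)))) ×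
  (∀ i : Fin nE, Lp E3 2 (volume.restrict (Set.Ioc 0 (l i)))) ×
  (Fin nE → E3) × (Fin nE → E3) × (Fin nE → E3) × (Fin nE → E3) × E3 × E3

abbrev YT (nE : ℕ) : Type :=
  (Fin nE → E3) × (Fin nE → E3) × (Fin nE → E3) × (Fin nE → E3) × E3 × E3

abbrev DT (nE nV : ℕ) : Type :=
  (Fin nE → E3) × (Fin nE → E3) × (Fin nV → E3) × (Fin nV → E3)

def Mfun (tail head : Fin nE → Fin nV) (l : Fin nE → ℝ) (t : Fin nE → ℝ → E3)
    (d : DT nE nV) : YT nE :=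
  (fun i => d.1 i - cross3 (∫ u in Set.Ioc 0 (l i), t i u) (d.2.1 i) - d.2.2.1 (head i),
   fun i => d.1 i - d.2.2.1 (tail i),
   fun i => d.2.1 i - d.2.2.2 (head i),
   fun i => d.2.1 i - d.2.2.2 (tail i),
   ∑ i, (l i • d.1 i - cross3 (∫ s in Set.Ioc 0 (l i), primI (t i) s) (d.2.1 i)),
   ∑ i, l i • d.2.1 i)

def Mlin (tail head : Fin nE → Fin nV) (l : Fin nE → ℝ) (t : Fin nE → ℝ → E3) :
    DT nE nV →ₗ[ℝ] YT nE where
  toFun := Mfun tail head l t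
  map_add' := by
    intro d e
    simp only [Mfun, Prod.fst_add, Prod.snd_add, Pi.add_apply, Prod.mk_add_mk]
    refine Prod.ext ?_ (Prod.ext ?_ (Prod.ext ?_ (Prod.ext ?_ (Prod.ext ?_ ?_))))
    · funext i; simp only [Pi.add_apply]; rw [cross3_add_right]; abel
    · funext i; simp only [Pi.add_apply]; abel
    · funext i; simp only [Pi.add_apply]; abel
    · funext i; simp only [Pi.add_apply]; abel
    · dsimp only
      rw [← Finset.sum_add_distrib]
      refine Finset.sum_congr rfl fun i _ => ?_
      rw [cross3_add_right, smul_add]; abel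
    · dsimp only
      rw [← Finset.sum_add_distrib]
      refine Finset.sum_congr rfl fun i _ => ?_
      rw [smul_add]
  map_smul' := by
    intro r d
    simp only [Mfun, Prod.smul_fst, Prod.smul_snd, Pi.smul_apply, Prod.smul_mk,
      RingHom.id_apply]
    refine Prod.ext ?_ (Prod.ext ?_ (Prod.ext ?_ (Prod.ext ?_ (Prod.ext ?_ ?_))))
    · funext i; simp only [Pi.smul_apply]; rw [cross3_smul_right, smul_sub, smul_sub]
    · funext i; simp only [Pi.smul_apply]; rw [smul_sub]
    · funext i; simp only [Pi.smul_apply]; rw [smul_sub]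
    · funext i; simp only [Pi.smul_apply]; rw [smul_sub]
    · dsimp only
      rw [Finset.smul_sum]
      refine Finset.sum_congr rfl fun i _ => ?_
      rw [cross3_smul_right, smul_sub, smul_comm r (l i)]
    · dsimp only
      rw [Finset.smul_sum]
      refine Finset.sum_congr rfl fun i _ => ?_
      rw [smul_comm r (l i)]

lemma Mlin_apply (tail head : Fin nE → Fin nV) (l : Fin nE → ℝ) (t : Fin nE → ℝ → E3)
    (d : DT nE nV) : Mlin tail head l t d = Mfun tail head l t d := rfl

def PhiFun (l : Fin nE → ℝ) (t : Fin nE → ℝ → E3) (x : XT l) : YT nE :=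
  (fun i => x.2.2.1 i - G1 (l i) (t i) (x.1 i, x.2.1 i),
   fun i => x.2.2.2.1 i,
   fun i => x.2.2.2.2.1 i - G3 (l i) (x.2.1 i),
   fun i => x.2.2.2.2.2.1 i,
   x.2.2.2.2.2.2.1 - ∑ i, G5 (l i) (t i) (x.1 i, x.2.1 i),
   x.2.2.2.2.2.2.2 - ∑ i, G6 (l i) (x.2.1 i))

lemma contPhi (l : Fin nE → ℝ) (hl : ∀ i, 0 < l i) (t : Fin nE → ℝ → E3)
    (htc : ∀ i, ContinuousOn (t i) (Set.Icc 0 (l i)))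
    (htu : ∀ i, ∀ s ∈ Set.Icc 0 (l i), ‖t i s‖ = 1) :
    Continuous (PhiFun l t) := by
  have cP : ∀ i, Continuous fun x : XT l => (x.1 i, x.2.1 i) := fun i =>
    ((continuous_apply i).comp continuous_fst).prodMk
      ((continuous_apply i).comp (continuous_fst.comp continuous_snd))
  have cQ : ∀ i, Continuous fun x : XT l => x.2.1 i := fun i =>
    (continuous_apply i).comp (continuous_fst.comp continuous_snd)
  refine Continuous.prodMk ?_ (Continuous.prodMk ?_ (Continuous.prodMk ?_
    (Continuous.prodMk ?_ (Continuous.prodMk ?_ ?_))))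
  · apply continuous_pi
    intro i
    exact ((continuous_apply i).comp
      (continuous_fst.comp (continuous_snd.comp continuous_snd))).sub
      ((contG1 (hl i).le (htc i) (htu i)).comp (cP i))
  · apply continuous_pi
    intro i
    exact (continuous_apply i).comp
      (continuous_fst.comp (continuous_snd.comp (continuous_snd.comp continuous_snd)))
  · apply continuous_pi
    intro i
    exact ((continuous_apply i).comp (continuous_fst.comp (continuous_snd.comp
      (continuous_snd.comp (continuous_snd.comp continuous_snd))))).sub
      ((contG3 (hl i).le).comp (cQ i))
  · apply continuous_pi
    intro i
    exact (continuous_apply i).comp (continuous_fst.comp (continuous_snd.comp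
      (continuous_snd.comp (continuous_snd.comp (continuous_snd.comp continuous_snd)))))
  · apply Continuous.sub
    · exact continuous_fst.comp (continuous_snd.comp (continuous_snd.comp
        (continuous_snd.comp (continuous_snd.comp (continuous_snd.comp continuous_snd)))))
    · exact continuous_finset_sum _ fun i _ =>
        (contG5 (hl i).le (htc i) (htu i)).comp (cP i)
  · apply Continuous.sub
    · exact continuous_snd.comp (continuous_snd.comp (continuous_snd.comp
        (continuous_snd.comp (continuous_snd.comp (continuous_snd.comp continuous_snd)))))
    · exact continuous_finset_sum _ fun i _ => (contG6 (hl i).le).comp (cQ i)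

end MainAssembly

/-- The range of Bᵀ is closed. -/
theorem stent_range_BT_closed
    (tail head : Fin nE → Fin nV) (l : Fin nE → ℝ)
    (hl : ∀ i, 0 < l i) (hconn : EdgeConn tail head)
    (Φ t : Fin nE → ℝ → E3)
    (hΦ : ∀ i, ∀ s ∈ Set.Icc 0 (l i), HasDerivWithinAt (Φ i) (t i s) (Set.Icc 0 (l i)) s)
    (htc : ∀ i, ContinuousOn (t i) (Set.Icc 0 (l i)))
    (htu : ∀ i, ∀ s ∈ Set.Icc 0 (l i), ‖t i s‖ = 1) :
    IsClosed {x :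
        (∀ i : Fin nE, Lp E3 2 (volume.restrict (Set.Ioc 0 (l i)))) ×
        (∀ i : Fin nE, Lp E3 2 (volume.restrict (Set.Ioc 0 (l i)))) ×
        (Fin nE → E3) × (Fin nE → E3) × (Fin nE → E3) × (Fin nE → E3) × E3 × E3 |
      ∃ (v dv w dw : Fin nE → ℝ → E3) (V W : Fin nV → E3),
        (∀ i, H1On (l i) (v i) (dv i)) ∧ (∀ i, H1On (l i) (w i) (dw i)) ∧
        (∀ i, (x.1 i : ℝ → E3) =ᵐ[volume.restrict (Set.Ioc 0 (l i))]
            fun s => dv i s + cross3 (t i s) (w i s)) ∧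
        (∀ i, (x.2.1 i : ℝ → E3) =ᵐ[volume.restrict (Set.Ioc 0 (l i))] dw i) ∧
        (∀ i, x.2.2.1 i = v i (l i) - V (head i)) ∧
        (∀ i, x.2.2.2.1 i = v i 0 - V (tail i)) ∧
        (∀ i, x.2.2.2.2.1 i = w i (l i) - W (head i)) ∧
        (∀ i, x.2.2.2.2.2.1 i = w i 0 - W (tail i)) ∧
        x.2.2.2.2.2.2.1 = (∑ i, ∫ s in Set.Ioc 0 (l i), v i s) ∧
        x.2.2.2.2.2.2.2 = (∑ i, ∫ s in Set.Ioc 0 (l i), w i s)} := by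
  have hset : {x :
        (∀ i : Fin nE, Lp E3 2 (volume.restrict (Set.Ioc 0 (l i)))) ×
        (∀ i : Fin nE, Lp E3 2 (volume.restrict (Set.Ioc 0 (l i)))) ×
        (Fin nE → E3) × (Fin nE → E3) × (Fin nE → E3) × (Fin nE → E3) × E3 × E3 |
      ∃ (v dv w dw : Fin nE → ℝ → E3) (V W : Fin nV → E3),
        (∀ i, H1On (l i) (v i) (dv i)) ∧ (∀ i, H1On (l i) (w i) (dw i)) ∧
        (∀ i, (x.1 i : ℝ → E3) =ᵐ[volume.restrict (Set.Ioc 0 (l i))]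
            fun s => dv i s + cross3 (t i s) (w i s)) ∧
        (∀ i, (x.2.1 i : ℝ → E3) =ᵐ[volume.restrict (Set.Ioc 0 (l i))] dw i) ∧
        (∀ i, x.2.2.1 i = v i (l i) - V (head i)) ∧
        (∀ i, x.2.2.2.1 i = v i 0 - V (tail i)) ∧
        (∀ i, x.2.2.2.2.1 i = w i (l i) - W (head i)) ∧
        (∀ i, x.2.2.2.2.2.1 i = w i 0 - W (tail i)) ∧
        x.2.2.2.2.2.2.1 = (∑ i, ∫ s in Set.Ioc 0 (l i), v i s) ∧
        x.2.2.2.2.2.2.2 = (∑ i, ∫ s in Set.Ioc 0 (l i), w i s)}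
      = PhiFun l t ⁻¹' (Set.range (Mlin tail head l t)) := by
    ext x
    simp only [Set.mem_setOf_eq, Set.mem_preimage, Set.mem_range]
    constructor
    · rintro ⟨v, dv, w, dw, V, W, hv, hw, hp, hq, hPp, hPm, hQp, hQm, hal, hbe⟩
      refine ⟨(fun i => v i 0, fun i => w i 0, V, W), ?_⟩
      rw [Mlin_apply]
      have hw' : ∀ i, ∀ s ∈ Set.Icc (0:ℝ) (l i),
          w i s = wF (l i) (x.2.1 i) (w i 0) s := fun i =>
        forward_w (hl i).le (hw i) (x.2.1 i) (hq i)
      have hv' : ∀ i, ∀ s ∈ Set.Icc (0:ℝ) (l i),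
          v i s = vF (l i) (t i) (x.1 i) (x.2.1 i) (v i 0) (w i 0) s := fun i =>
        forward_v (hl i).le (htc i) (hv i) (hw i) (x.1 i) (x.2.1 i)
          (hp i) (hq i)
      refine Prod.ext ?_ (Prod.ext ?_ (Prod.ext ?_ (Prod.ext ?_ (Prod.ext ?_ ?_))))
      · funext i
        show v i 0 - cross3 _ (w i 0) - V (head i)
          = x.2.2.1 i - G1 (l i) (t i) (x.1 i, x.2.1 i)
        rw [hPp i, hv' i (l i) ⟨(hl i).le, le_rfl⟩,
          vF_eval (hl i).le (htc i) (x.1 i) (x.2.1 i) (v i 0) (w i 0)]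
        abel
      · funext i
        show v i 0 - V (tail i) = x.2.2.2.1 i
        rw [hPm i]
      · funext i
        show w i 0 - W (head i) = x.2.2.2.2.1 i - G3 (l i) (x.2.1 i)
        rw [hQp i, hw' i (l i) ⟨(hl i).le, le_rfl⟩, wF_eval]
        abel
      · funext i
        show w i 0 - W (tail i) = x.2.2.2.2.2.1 i
        rw [hQm i]
      · show (∑ i, (l i • v i 0 - cross3 _ (w i 0)))
          = x.2.2.2.2.2.2.1 - ∑ i, G5 (l i) (t i) (x.1 i, x.2.1 i)
        rw [hal]
        have hint : ∀ i, ∫ s in Set.Ioc 0 (l i), v i s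
            = l i • v i 0 + G5 (l i) (t i) (x.1 i, x.2.1 i)
              - cross3 (∫ s in Set.Ioc 0 (l i), primI (t i) s) (w i 0) := by
          intro i
          rw [setIntegral_congr_fun measurableSet_Ioc
            (fun s hs => hv' i s (Set.Ioc_subset_Icc_self hs))]
          exact int_vF (hl i).le (htc i) (x.1 i) (x.2.1 i) (v i 0) (w i 0)
        rw [Finset.sum_congr rfl fun i _ => hint i, ← Finset.sum_sub_distrib]
        refine Finset.sum_congr rfl fun i _ => ?_
        abel
      · show (∑ i, l i • w i 0) = x.2.2.2.2.2.2.2 - ∑ i, G6 (l i) (x.2.1 i)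
        rw [hbe]
        have hint : ∀ i, ∫ s in Set.Ioc 0 (l i), w i s
            = l i • w i 0 + G6 (l i) (x.2.1 i) := by
          intro i
          rw [setIntegral_congr_fun measurableSet_Ioc
            (fun s hs => hw' i s (Set.Ioc_subset_Icc_self hs))]
          exact int_wF (hl i).le (x.2.1 i) (w i 0)
        rw [Finset.sum_congr rfl fun i _ => hint i, ← Finset.sum_sub_distrib]
        refine Finset.sum_congr rfl fun i _ => ?_
        abel
    · rintro ⟨d, hMd⟩
      rw [Mlin_apply] at hMd
      obtain ⟨a, b, V, W⟩ := d
      have h1 := fun i => congrFun (congrArg (fun y => y.1) hMd) i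
      have h2 := fun i => congrFun (congrArg (fun y => y.2.1) hMd) i
      have h3 := fun i => congrFun (congrArg (fun y => y.2.2.1) hMd) i
      have h4 := fun i => congrFun (congrArg (fun y => y.2.2.2.1) hMd) i
      have h5 := congrArg (fun y => y.2.2.2.2.1) hMd
      have h6 := congrArg (fun y => y.2.2.2.2.2) hMd
      simp only [Mfun, PhiFun] at h1 h2 h3 h4 h5 h6
      refine ⟨fun i => vF (l i) (t i) (x.1 i) (x.2.1 i) (a i) (b i),
        fun i => dvF (l i) (t i) (x.1 i) (x.2.1 i) (b i),
        fun i => wF (l i) (x.2.1 i) (b i),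
        fun i => ((x.2.1 i : Lp E3 2 _) : ℝ → E3), V, W,
        fun i => H1On_vF (hl i).le (htc i) (x.1 i) (x.2.1 i) (a i) (b i),
        fun i => H1On_wF (x.2.1 i) (b i), ?_, ?_, ?_, ?_, ?_, ?_, ?_, ?_⟩
      · intro i
        filter_upwards with s
        show (x.1 i : ℝ → E3) s = ((x.1 i : ℝ → E3) s - cross3 (t i s) _) + cross3 (t i s) _
        abel
      · intro i
        exact Filter.EventuallyEq.rfl
      · intro i
        beta_reduce
        rw [vF_eval (hl i).le (htc i) (x.1 i) (x.2.1 i) (a i) (b i),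
          sub_eq_iff_eq_add.mp (h1 i).symm]
        abel
      · intro i
        beta_reduce
        rw [vF_zero, ← h2 i]
      · intro i
        beta_reduce
        rw [wF_eval, sub_eq_iff_eq_add.mp (h3 i).symm]
        abel
      · intro i
        beta_reduce
        rw [wF_zero, ← h4 i]
      · beta_reduce
        have hint : ∀ i, ∫ s in Set.Ioc 0 (l i),
            vF (l i) (t i) (x.1 i) (x.2.1 i) (a i) (b i) s
            = l i • a i + G5 (l i) (t i) (x.1 i, x.2.1 i)
              - cross3 (∫ s in Set.Ioc 0 (l i), primI (t i) s) (b i) := fun i =>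
          int_vF (hl i).le (htc i) (x.1 i) (x.2.1 i) (a i) (b i)
        rw [Finset.sum_congr rfl fun i _ => hint i]
        have h5' : x.2.2.2.2.2.2.1
            = (∑ i, (l i • a i - cross3 (∫ s in Set.Ioc 0 (l i), primI (t i) s) (b i)))
              + ∑ i, G5 (l i) (t i) (x.1 i, x.2.1 i) := by
          exact sub_eq_iff_eq_add.mp h5.symm
        rw [h5', ← Finset.sum_add_distrib]
        refine Finset.sum_congr rfl fun i _ => ?_
        abel
      · beta_reduce
        have hint : ∀ i, ∫ s in Set.Ioc 0 (l i), wF (l i) (x.2.1 i) (b i) s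
            = l i • b i + G6 (l i) (x.2.1 i) := fun i =>
          int_wF (hl i).le (x.2.1 i) (b i)
        rw [Finset.sum_congr rfl fun i _ => hint i]
        have h6' : x.2.2.2.2.2.2.2
            = (∑ i, l i • b i) + ∑ i, G6 (l i) (x.2.1 i) := by
          exact sub_eq_iff_eq_add.mp h6.symm
        rw [h6', ← Finset.sum_add_distrib]
  rw [hset]
  set_option synthInstance.maxHeartbeats 1000000 in
  apply IsClosed.preimage (contPhi l hl t htc htu)
  rw [← LinearMap.coe_range]
  haveI : ContinuousSMul ℝ E3 := inferInstance
  exact Submodule.closed_of_finiteDimensional _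

end
end

section
/- Triviality of the discrete kernel of B_h^T: assume all struts are straight, the underlying graph is connected, and k ≥ n − 1. Suppose (v^i), (w^i) are families of ℝ³-valued polynomial functions of degree ≤ n on the edges and V, W ∈ (ℝ³)^{n_V} satisfy: (1) Σ_i ∫₀^{ℓⁱ}(−p^i·(∂ₛv^i + tⁱ × w^i) − q^i·∂ₛw^i) ds = 0 for all families (p^i), (q^i) of ℝ³-valued polynomial functions of degree ≤ k; (2) Σ_i ∫₀^{ℓⁱ} v^i ds = 0 and Σ_i ∫₀^{ℓⁱ} w^i ds = 0; (3) v^i(0) = V^{tail(i)}, v^i(ℓⁱ) = V^{head(i)}, w^i(0) = W^{tail(i)}, w^i(ℓⁱ) = W^{head(i)} for every edge i. Then v^i = 0 and w^i = 0 for every edge i, and V = 0 and W = 0. -/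
open MeasureTheory Matrix

noncomputable section

variable {nE nV : ℕ}

lemma dot3_zero_left (b : E3) : dot3 0 b = 0 := by simp [dot3]

lemma poly_key {l : ℝ} (hl : 0 < l) (Q : Fin 3 → Polynomial ℝ)
    (h : ∫ s in Set.Ioc 0 l, (∑ j : Fin 3, (Q j).eval s * (Q j).eval s) = 0) :
    ∀ j s, (Q j).eval s = 0 := by
  set R : Polynomial ℝ := ∑ j : Fin 3, Q j * Q j with hR
  have hEval : ∀ s, R.eval s = ∑ j : Fin 3, (Q j).eval s * (Q j).eval s := by
    intro s; simp [hR, Polynomial.eval_finset_sum]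
  have hnn : ∀ s, 0 ≤ R.eval s := by
    intro s; rw [hEval]; exact Finset.sum_nonneg fun j _ => mul_self_nonneg _
  have hint : ∫ s in Set.Ioc 0 l, R.eval s = 0 := by
    rw [show (fun s => R.eval s) = fun s => ∑ j : Fin 3, (Q j).eval s * (Q j).eval s from
      funext hEval]
    exact h
  have hR0 : R = 0 := by
    by_contra hne
    have hfin : ({x | R.IsRoot x} : Set ℝ).Finite := Polynomial.finite_setOf_isRoot hne
    have hInt : IntegrableOn (fun s => R.eval s) (Set.Ioc 0 l) :=
      R.continuous.integrableOn_Ioc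
    have hae := (MeasureTheory.integral_eq_zero_iff_of_nonneg (fun s => hnn s) hInt).mp hint
    have hae' : ∀ᵐ s ∂(volume.restrict (Set.Ioc 0 l)), R.eval s = 0 := by
      filter_upwards [hae] with s hs; simpa using hs
    have hmeas : MeasurableSet {s : ℝ | ¬ R.eval s = 0} := by
      rw [show {s : ℝ | ¬ R.eval s = 0} = {s : ℝ | R.eval s = 0}ᶜ from rfl]
      exact (isClosed_eq R.continuous continuous_const).measurableSet.compl
    have h0 : volume ({s : ℝ | ¬ R.eval s = 0} ∩ Set.Ioc 0 l) = 0 := by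
      have h0' := MeasureTheory.ae_iff.mp hae'
      rwa [Measure.restrict_apply hmeas] at h0' 
    have hsub : Set.Ioc 0 l ⊆ {x : ℝ | R.IsRoot x} ∪ ({s : ℝ | ¬ R.eval s = 0} ∩ Set.Ioc 0 l) := by
      intro x hx
      by_cases hx0 : R.eval x = 0
      · exact Or.inl hx0
      · exact Or.inr ⟨hx0, hx⟩
    have hle := (measure_mono hsub).trans (measure_union_le (μ := volume) _ _)
    rw [hfin.measure_zero volume, h0, add_zero, Real.volume_Ioc] at hle
    rw [ENNReal.ofReal_le_iff_le_toReal (by simp)] at hle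
    simp at hle
    exact absurd hle (not_le.mpr hl)
  intro j s
  have h0 : ∑ j : Fin 3, (Q j).eval s * (Q j).eval s = 0 := by rw [← hEval s, hR0]; simp
  have := (Finset.sum_eq_zero_iff_of_nonneg (fun j _ => mul_self_nonneg _)).mp h0 j
    (Finset.mem_univ j)
  exact mul_self_eq_zero.mp this

lemma int_self_zero {l : ℝ} (hl : 0 < l) {g : ℝ → E3}
    (hg : ∀ j : Fin 3, ∃ P : Polynomial ℝ, ∀ s, g s j = P.eval s)
    (h : ∫ s in Set.Ioc 0 l, dot3 (g s) (g s) = 0) : ∀ s, g s = 0 := by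
  choose Q hQ using hg
  simp only [dot3] at h
  simp only [hQ] at h
  have key := poly_key hl Q h
  intro s; ext j
  simp [hQ j s, key j s]

lemma polyDeriv {m : ℕ} {g g' : ℝ → E3}
    (hg : ∀ j : Fin 3, ∃ P : Polynomial ℝ, P.natDegree ≤ m ∧ ∀ s, g s j = P.eval s)
    (hd : ∀ s, HasDerivAt g (g' s) s) (j : Fin 3) :
    ∃ P : Polynomial ℝ, P.natDegree ≤ m - 1 ∧ ∀ s, g' s j = P.eval s := by
  obtain ⟨P, hPdeg, hPeval⟩ := hg j
  refine ⟨P.derivative, le_trans (Polynomial.natDegree_derivative_le P)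
    (Nat.sub_le_sub_right hPdeg 1), fun s => ?_⟩
  have h1 : HasDerivAt (fun s => g s j) (g' s j) s := by
    have := (EuclideanSpace.proj (𝕜 := ℝ) j).hasFDerivAt.comp_hasDerivAt s (hd s)
    exact this
  have h2 : HasDerivAt (fun s => g s j) (P.derivative.eval s) s := by
    have h3 : (fun s => g s j) = fun s => P.eval s := funext hPeval
    rw [h3]; exact P.hasDerivAt s
  exact h1.unique h2

lemma constE3 {f : ℝ → E3} (h : ∀ s, HasDerivAt f 0 s) (s : ℝ) : f s = f 0 :=
  is_const_of_fderiv_eq_zero (fun x => (h x).differentiableAt)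
    (fun x => by
      have h0 : (ContinuousLinearMap.smulRight (1 : ℝ →L[ℝ] ℝ) (0 : E3)) = 0 := by
        ext y; simp
      exact (h x).hasFDerivAt.fderiv.trans h0) s 0

lemma conn_eq {nE nV : ℕ} {tail head : Fin nE → Fin nV} (hconn : EdgeConn tail head)
    {f : Fin nV → E3} (hf : ∀ i, f (tail i) = f (head i)) (a b : Fin nV) : f a = f b := by
  have h := hconn a b
  induction h with
  | refl => rfl
  | tail _ hstep ih =>
      obtain ⟨i, ⟨ht, hh⟩ | ⟨ht, hh⟩⟩ := hstep
      · rw [ih, ← ht, hf i, hh]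
      · rw [ih, ← hh, ← hf i, ht]


/-- Triviality of the discrete kernel of Bₕᵀ (straight struts,
connected graph, k ≥ n − 1). -/
theorem stent_discrete_ker_BT_trivial {k n : ℕ}
    (tail head : Fin nE → Fin nV) (l : Fin nE → ℝ)
    (hl : ∀ i, 0 < l i) (hNE : 0 < nE) (hconn : EdgeConn tail head)
    (t : Fin nE → E3) (Φ : Fin nE → ℝ → E3)
    (htu : ∀ i, ‖t i‖ = 1)
    (hΦ : ∀ i, ∀ s ∈ Set.Icc 0 (l i), Φ i s = Φ i 0 + s • t i)
    (hkn : n ≤ k + 1)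
    (v dv w dw : Fin nE → ℝ → E3) (V W : Fin nV → E3)
    (hvn : ∀ i, PolyDeg n (v i)) (hdv : ∀ i, ∀ s, HasDerivAt (v i) (dv i s) s)
    (hwn : ∀ i, PolyDeg n (w i)) (hdw : ∀ i, ∀ s, HasDerivAt (w i) (dw i s) s)
    (h1 : ∀ (p q : Fin nE → ℝ → E3),
      (∀ i, PolyDeg k (p i)) → (∀ i, PolyDeg k (q i)) →
      (∑ i, ∫ s in Set.Ioc 0 (l i),
        (-(dot3 (p i s) (dv i s + cross3 (t i) (w i s))) - dot3 (q i s) (dw i s))) = 0)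
    (h2v : ∑ i, ∫ s in Set.Ioc 0 (l i), v i s = 0)
    (h2w : ∑ i, ∫ s in Set.Ioc 0 (l i), w i s = 0)
    (hb1 : ∀ i, v i 0 = V (tail i)) (hb2 : ∀ i, v i (l i) = V (head i))
    (hb3 : ∀ i, w i 0 = W (tail i)) (hb4 : ∀ i, w i (l i) = W (head i)) :
    (∀ i, ∀ s ∈ Set.Icc 0 (l i), v i s = 0 ∧ w i s = 0) ∧ V = 0 ∧ W = 0 := by
  classical
  haveI : Nonempty (Fin nE) := ⟨⟨0, hNE⟩⟩
  have hzero : PolyDeg k (fun _ : ℝ => (0 : E3)) := fun j => ⟨0, by simp, fun s => by simp⟩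
  have hdwP : ∀ i, ∀ j : Fin 3, ∃ P : Polynomial ℝ, P.natDegree ≤ k ∧ ∀ s, dw i s j = P.eval s :=
    fun i j => (polyDeriv (hwn i) (hdw i) j).imp fun P hP => ⟨hP.1.trans (by omega), hP.2⟩
  have hdvP : ∀ i, ∀ j : Fin 3, ∃ P : Polynomial ℝ, P.natDegree ≤ k ∧ ∀ s, dv i s j = P.eval s :=
    fun i j => (polyDeriv (hvn i) (hdv i) j).imp fun P hP => ⟨hP.1.trans (by omega), hP.2⟩
  -- Step 1: dw = 0
  have hdw0 : ∀ i s, dw i s = 0 := by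
    intro i₀
    have hq : ∀ i, PolyDeg k ((fun i => if i = i₀ then dw i₀ else 0) i) := by
      intro i
      by_cases hi : i = i₀
      · subst hi; simp only [if_pos rfl]; exact fun j => hdwP i j
      · simp only [if_neg hi]; exact hzero
    have h := h1 (fun _ _ => 0) (fun i => if i = i₀ then dw i₀ else 0) (fun _ => hzero) hq
    rw [Finset.sum_eq_single i₀ (fun b _ hb => by simp [hb, dot3_zero_left])
      (fun hn => absurd (Finset.mem_univ i₀) hn)] at h
    rw [MeasureTheory.setIntegral_congr_fun measurableSet_Ioc
      (g := fun s => -(dot3 (dw i₀ s) (dw i₀ s)))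
      (fun s _ => by simp [dot3_zero_left]), MeasureTheory.integral_neg, neg_eq_zero] at h
    exact int_self_zero (hl i₀) (fun j => (hdwP i₀ j).imp fun P hP => hP.2) h
  -- Step 2: w constant on each edge
  have hwc : ∀ i s, w i s = w i 0 := fun i s =>
    constE3 (fun x => hdw0 i x ▸ hdw i x) s
  -- Step 3: W constant on vertices
  have hWeq : ∀ a b, W a = W b :=
    conn_eq hconn fun i => (hb3 i).symm.trans ((hwc i (l i)).symm.trans (hb4 i))
  set i₀ : Fin nE := ⟨0, hNE⟩ with hi₀
  have hsuml : 0 < ∑ i, l i := Finset.sum_pos (fun i _ => hl i) Finset.univ_nonempty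
  have hconst_int : ∀ (u : Fin nE → ℝ → E3) (c : E3), (∀ i s, u i s = c) →
      ∑ i, ∫ s in Set.Ioc 0 (l i), u i s = (∑ i, l i) • c := by
    intro u c hc
    rw [Finset.sum_smul]
    refine Finset.sum_congr rfl fun i _ => ?_
    rw [MeasureTheory.setIntegral_congr_fun measurableSet_Ioc (g := fun _ => c)
      (fun s _ => hc i s), MeasureTheory.setIntegral_const, Real.volume_real_Ioc, sub_zero,
      max_eq_left (hl i).le]
  -- Step 4: W = 0, w = 0
  have hwC : ∀ i s, w i s = W (tail i₀) := fun i s =>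
    (hwc i s).trans ((hb3 i).trans (hWeq (tail i) (tail i₀)))
  have hWc0 : W (tail i₀) = 0 := by
    have := (hconst_int w (W (tail i₀)) hwC).symm.trans h2w
    rcases smul_eq_zero.mp this with h | h
    · exact absurd h (ne_of_gt hsuml)
    · exact h
  have hw0 : ∀ i s, w i s = 0 := fun i s => (hwC i s).trans hWc0
  have hW0 : W = 0 := funext fun j => ((hWeq j (tail i₀)).trans hWc0)
  -- Step 5: dv = 0
  have hdv0 : ∀ i s, dv i s = 0 := by
    intro i₀'
    have hp : ∀ i, PolyDeg k ((fun i => if i = i₀' then dv i₀' else 0) i) := by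
      intro i
      by_cases hi : i = i₀'
      · subst hi; simp only [if_pos rfl]; exact fun j => hdvP i j
      · simp only [if_neg hi]; exact hzero
    have h := h1 (fun i => if i = i₀' then dv i₀' else 0) (fun _ _ => 0) hp (fun _ => hzero)
    rw [Finset.sum_eq_single i₀' (fun b _ hb => by simp [hb, dot3_zero_left])
      (fun hn => absurd (Finset.mem_univ i₀') hn)] at h
    rw [MeasureTheory.setIntegral_congr_fun measurableSet_Ioc
      (g := fun s => -(dot3 (dv i₀' s) (dv i₀' s)))
      (fun s _ => by simp [hw0 i₀' s, cross3_zero_right, dot3_zero_left]),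
      MeasureTheory.integral_neg, neg_eq_zero] at h
    exact int_self_zero (hl i₀') (fun j => (hdvP i₀' j).imp fun P hP => hP.2) h
  -- Step 6: v constant, V = 0, v = 0
  have hvc : ∀ i s, v i s = v i 0 := fun i s =>
    constE3 (fun x => hdv0 i x ▸ hdv i x) s
  have hVeq : ∀ a b, V a = V b :=
    conn_eq hconn fun i => (hb1 i).symm.trans ((hvc i (l i)).symm.trans (hb2 i))
  have hvC : ∀ i s, v i s = V (tail i₀) := fun i s =>
    (hvc i s).trans ((hb1 i).trans (hVeq (tail i) (tail i₀)))
  have hVc0 : V (tail i₀) = 0 := by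
    have := (hconst_int v (V (tail i₀)) hvC).symm.trans h2v
    rcases smul_eq_zero.mp this with h | h
    · exact absurd h (ne_of_gt hsuml)
    · exact h
  have hv0 : ∀ i s, v i s = 0 := fun i s => (hvC i s).trans hVc0
  have hV0 : V = 0 := funext fun j => ((hVeq j (tail i₀)).trans hVc0)
  exact ⟨fun i s _ => ⟨hv0 i s, hw0 i s⟩, hV0, hW0⟩


end
end
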